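/- arXiv:1406.6015 — 3 statements merged into one kernel-verified Lean document; each statement's English description precedes it below -/
import Mathlib

section
/- Let P = {x ∈ ℝⁿ : Ax ≥ b, x ≥ 0} where A has non-negative entries and b ≥ 0. If v and v' are distinct vertices of P and a strict convex combination y = Σ λ_k u^k of vertices u^1,…,u^ℓ of P satisfies y ≤ (v+v')/2 componentwise, implies ℓ = 2 with {u^1,u^2} = {v,v'}, then v and v' are adjacent in P; conversely, adjacency implies this property. -/
open Finset

/-- Support of a vector. -/
def supp {n : ℕ} (x : Fin n → ℝ) : Set (Fin n) := {j | x j ≠ 0}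

/-- Support of the `t`-th row of a matrix. -/
def rowSupp {m n : ℕ} (A : Matrix (Fin m) (Fin n) ℝ) (t : Fin m) : Set (Fin n) :=
  {j | A t j ≠ 0}

def IsBinaryMatrix {m n : ℕ} (A : Matrix (Fin m) (Fin n) ℝ) : Prop :=
  ∀ t j, A t j = 0 ∨ A t j = 1

def IsBinaryVec {n : ℕ} (x : Fin n → ℝ) : Prop := ∀ j, x j = 0 ∨ x j = 1

/-- The polyhedron `{x | A x ≥ b, x ≥ 0}`. -/
def polyP {m n : ℕ} (A : Matrix (Fin m) (Fin n) ℝ) (b : Fin m → ℝ) : Set (Fin n → ℝ) :=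
  {x | (∀ i, b i ≤ ∑ j, A i j * x j) ∧ ∀ j, 0 ≤ x j}

/-- The linear relaxation `Q(A) = {x | A x ≥ 1, x ≥ 0}`. -/
def polyQ {m n : ℕ} (A : Matrix (Fin m) (Fin n) ℝ) : Set (Fin n → ℝ) :=
  {x | (∀ i, 1 ≤ ∑ j, A i j * x j) ∧ ∀ j, 0 ≤ x j}

/-- The set covering polyhedron `Q*(A)`: convex hull of nonnegative integer solutions of
`A x ≥ 1`. -/
def Qstar {m n : ℕ} (A : Matrix (Fin m) (Fin n) ℝ) : Set (Fin n → ℝ) :=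
  convexHull ℝ {x | (∀ j, ∃ k : ℕ, x j = k) ∧ ∀ i, 1 ≤ ∑ j, A i j * x j}

/-- A vertex of a convex set is an extreme point. -/
def IsVertex {n : ℕ} (S : Set (Fin n → ℝ)) (v : Fin n → ℝ) : Prop :=
  v ∈ S.extremePoints ℝ

/-- Two distinct vertices are adjacent when they lie on a common edge, i.e. the segment
joining them is a face (extreme subset) of `S`. -/
def AdjacentVerts {n : ℕ} (S : Set (Fin n → ℝ)) (v w : Fin n → ℝ) : Prop :=
  v ≠ w ∧ IsVertex S v ∧ IsVertex S w ∧ IsExtreme ℝ S (segment ℝ v w)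

/-- There is a row support `C` with `C ∩ supp v = {p}` and `C ∩ supp v' = {p'}`. -/
def jsgEdge {m n : ℕ} (A : Matrix (Fin m) (Fin n) ℝ) (v v' : Fin n → ℝ)
    (p p' : Fin n) : Prop :=
  ∃ t, rowSupp A t ∩ supp v = {p} ∧ rowSupp A t ∩ supp v' = {p'}

/-- The joint saturation graph of `v` and `v'` with respect to `A`. -/
def JSG {m n : ℕ} (A : Matrix (Fin m) (Fin n) ℝ) (v v' : Fin n → ℝ) :
    SimpleGraph (Fin n) where
  Adj p p' := p ≠ p' ∧ (jsgEdge A v v' p p' ∨ jsgEdge A v v' p' p)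
  symm := by constructor; intro p p' h; exact ⟨h.1.symm, h.2.symm⟩
  loopless := by constructor; intro p h; exact h.1 rfl

/-- The node set of the joint saturation graph: the symmetric difference of the supports. -/
def jsgNodes {n : ℕ} (v v' : Fin n → ℝ) : Set (Fin n) :=
  (supp v \ supp v') ∪ (supp v' \ supp v)

def JSGConnected {m n : ℕ} (A : Matrix (Fin m) (Fin n) ℝ) (v v' : Fin n → ℝ) : Prop :=
  ∀ p ∈ jsgNodes v v', ∀ q ∈ jsgNodes v v', (JSG A v v').Reachable p q

/-- One of the two partite sets is contained in a single connected component. -/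
def JSGPartiteConnected {m n : ℕ} (A : Matrix (Fin m) (Fin n) ℝ) (v v' : Fin n → ℝ) : Prop :=
  (∀ p ∈ supp v \ supp v', ∀ q ∈ supp v \ supp v', (JSG A v v').Reachable p q) ∨
  (∀ p ∈ supp v' \ supp v, ∀ q ∈ supp v' \ supp v, (JSG A v v').Reachable p q)

/-- Exactly two components, one of which is an isolated node. -/
def JSGAlmostConnected {m n : ℕ} (A : Matrix (Fin m) (Fin n) ℝ) (v v' : Fin n → ℝ) : Prop :=
  ∃ q ∈ jsgNodes v v', (∀ p, ¬ (JSG A v v').Adj q p) ∧ (jsgNodes v v' \ {q}).Nonempty ∧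
    ∀ p ∈ jsgNodes v v' \ {q}, ∀ r ∈ jsgNodes v v' \ {q}, (JSG A v v').Reachable p r

/-- The (directed) circular arc from `i` to `j` in `Fin n`. -/
def arc {n : ℕ} [NeZero n] (i j : Fin n) : Set (Fin n) :=
  {k | ∃ h : ℕ, h ≤ ((j - i : Fin n) : ℕ) ∧ k = i + (Fin.ofNat n h)}

/-- A matrix is row circular if each row support is a circular arc. -/
def RowCircular {m n : ℕ} [NeZero n] (A : Matrix (Fin m) (Fin n) ℝ) : Prop :=
  ∀ t, ∃ i j : Fin n, rowSupp A t = arc i j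

/-- The standard assumptions: binary, no dominating rows, between 2 and n-1 ones per row,
no all-zero or all-one column. -/
def StandardAssumptions {m n : ℕ} (A : Matrix (Fin m) (Fin n) ℝ) : Prop :=
  IsBinaryMatrix A ∧
  (∀ s t : Fin m, s ≠ t → ¬ rowSupp A s ⊆ rowSupp A t) ∧
  (∀ t, 2 ≤ (rowSupp A t).ncard ∧ (rowSupp A t).ncard ≤ n - 1) ∧
  (∀ j : Fin n, (∃ t, A t j ≠ 0) ∧ (∃ t, A t j = 0))

/-- `a` and `b` occur consecutively (in either order) in the list `l`. -/
def ListConsec {α : Type*} (l : List α) (a b : α) : Prop :=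
  ∃ k : ℕ, (l[k]? = some a ∧ l[k+1]? = some b) ∨ (l[k]? = some b ∧ l[k+1]? = some a)

/-- `a` and `b` occur cyclically consecutively (in either order) in the list `l`. -/
def CycConsec {α : Type*} (l : List α) (a b : α) : Prop :=
  ∃ k : ℕ, k < l.length ∧
    ((l[k]? = some a ∧ l[(k+1) % l.length]? = some b) ∨
     (l[k]? = some b ∧ l[(k+1) % l.length]? = some a))

/-- The set `S` induces a path (possibly a single node) in `G`. -/
def IsPathOn {n : ℕ} (G : SimpleGraph (Fin n)) (S : Set (Fin n)) : Prop :=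
  ∃ l : List (Fin n), l.Nodup ∧ (∀ x, x ∈ S ↔ x ∈ l) ∧
    (∀ a b, a ∈ S → G.Adj a b → ListConsec l a b) ∧
    (∀ a b, ListConsec l a b → G.Adj a b)

/-- The set `S` induces a cycle in `G`. -/
def IsCycleOn {n : ℕ} (G : SimpleGraph (Fin n)) (S : Set (Fin n)) : Prop :=
  ∃ l : List (Fin n), 3 ≤ l.length ∧ l.Nodup ∧ (∀ x, x ∈ S ↔ x ∈ l) ∧
    (∀ a b, a ∈ S → G.Adj a b → CycConsec l a b) ∧
    (∀ a b, CycConsec l a b → G.Adj a b)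

/-- `p` and `q` are cyclically consecutive elements of `S`. -/
def CyclConsecIn {n : ℕ} [NeZero n] (S : Set (Fin n)) (p q : Fin n) : Prop :=
  p ≠ q ∧ p ∈ S ∧ q ∈ S ∧ (arc p q ∩ S = {p, q} ∨ arc q p ∩ S = {p, q})

/-- The circulant matrix `C(n,2)` with row supports `{t, t+1}` (mod n). -/
def Cn2 (n : ℕ) [NeZero n] : Matrix (Fin n) (Fin n) ℝ :=
  fun t j => if j = t ∨ j = t + 1 then 1 else 0

/-- Append a row to a matrix. -/
def appendRow {m n : ℕ} (A : Matrix (Fin m) (Fin n) ℝ) (a : Fin n → ℝ) :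
    Matrix (Fin (m+1)) (Fin n) ℝ :=
  fun t j => if h : (t : ℕ) < m then A ⟨t, h⟩ j else a j

/-- A set of points is integral if all its extreme points are integer vectors. -/
def IsIntegralSet {n : ℕ} (S : Set (Fin n → ℝ)) : Prop :=
  ∀ x ∈ S.extremePoints ℝ, ∀ j, ∃ z : ℤ, x j = z

/-- A binary matrix is minimally nonideal if `Q(A)` is not integral but both restrictions
`Q(A) ∩ {x_i = 0}` and `Q(A) ∩ {x_i = 1}` are integral for every coordinate `i`. -/
def MinimallyNonideal {m n : ℕ} (A : Matrix (Fin m) (Fin n) ℝ) : Prop :=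
  ¬ IsIntegralSet (polyQ A) ∧
  ∀ i : Fin n, IsIntegralSet (polyQ A ∩ {x | x i = 0}) ∧
               IsIntegralSet (polyQ A ∩ {x | x i = 1})

/-- The matrix of the degenerate projective plane with `t+1` points and lines. -/
def Jmat (t : ℕ) : Matrix (Fin (t+1)) (Fin (t+1)) ℝ :=
  fun i j => if i = 0 then (if j = 0 then 0 else 1) else (if j = 0 ∨ j = i then 1 else 0)

/-- `A` is isomorphic to some degenerate projective plane matrix `J_t`, `t ≥ 2`. -/
def IsoToDegenProjPlane {m n : ℕ} (A : Matrix (Fin m) (Fin n) ℝ) : Prop :=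
  ∃ t : ℕ, 2 ≤ t ∧ ∃ (σ : Fin m ≃ Fin (t+1)) (τ : Fin n ≃ Fin (t+1)),
    ∀ i j, A i j = Jmat t (σ i) (τ j)

/-- `A₁` is the core of `A`: a square nonsingular row submatrix with `r` ones per row and
per column, all other rows of `A` having more than `r` ones. -/
def IsCore {m n : ℕ} (A : Matrix (Fin m) (Fin n) ℝ) (A₁ : Matrix (Fin n) (Fin n) ℝ)
    (r : ℕ) : Prop :=
  2 ≤ r ∧ A₁.det ≠ 0 ∧
  (∃ f : Fin n → Fin m, Function.Injective f ∧ (∀ i, A₁ i = A (f i)) ∧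
    ∀ t, t ∉ Set.range f → r < (rowSupp A t).ncard) ∧
  (∀ i, (rowSupp A₁ i).ncard = r) ∧ (∀ j, {i | A₁ i j ≠ 0}.ncard = r)

/-- `B₁` is the core of the blocker of `A`: a square nonsingular matrix whose rows are
binary vertices of `Q*(A)` with `s` ones per row and per column, all other binary
vertices of `Q*(A)` having more than `s` ones. -/
def IsBlockerCore {m n : ℕ} (A : Matrix (Fin m) (Fin n) ℝ) (B₁ : Matrix (Fin n) (Fin n) ℝ)
    (s : ℕ) : Prop :=
  2 ≤ s ∧ B₁.det ≠ 0 ∧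
  (∀ i, IsBinaryVec (B₁ i) ∧ IsVertex (Qstar A) (B₁ i)) ∧
  Function.Injective (fun i => B₁ i) ∧
  (∀ i, (rowSupp B₁ i).ncard = s) ∧ (∀ j, {i | B₁ i j ≠ 0}.ncard = s) ∧
  (∀ x, IsBinaryVec x → IsVertex (Qstar A) x → (∀ i, x ≠ B₁ i) → s < (supp x).ncard)

/-- `w^i` for `n = 3ν`: the complement of the characteristic vector of the residue class
`i` mod 3. -/
def wVec (n : ℕ) (i : Fin 3) : Fin n → ℝ :=
  fun k => if (k : ℕ) % 3 = (i : ℕ) then 0 else 1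

/-- `a^i` for `n = 3ν`: the characteristic vector of the residue class `i` mod 3
(`a¹ = (1,0,0,1,0,0,…)` corresponds to `i = 0`). -/
def aVec (n : ℕ) (i : ℕ) : Fin n → ℝ :=
  fun k => if (k : ℕ) % 3 = i then 1 else 0

section Stmt0Aux

variable {m n : ℕ}

private lemma rowexp (A : Matrix (Fin m) (Fin n) ℝ) (i : Fin m) (x d : Fin n → ℝ) (t : ℝ) :
    ∑ j, A i j * (x j + t * d j) = (∑ j, A i j * x j) + t * ∑ j, A i j * d j := by
  rw [Finset.mul_sum, ← Finset.sum_add_distrib]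
  exact Finset.sum_congr rfl fun j _ => by ring

private lemma polyP_two_mem {A : Matrix (Fin m) (Fin n) ℝ} {b : Fin m → ℝ}
    {x y : Fin n → ℝ} (hx : x ∈ polyP A b) (hy : y ∈ polyP A b)
    {s t : ℝ} (hs : 0 ≤ s) (ht : 0 ≤ t) (hst : s + t = 1) :
    (fun j => s * x j + t * y j) ∈ polyP A b := by
  constructor
  · intro i
    have hexp : ∑ j, A i j * (s * x j + t * y j)
        = s * (∑ j, A i j * x j) + t * ∑ j, A i j * y j := by
      rw [Finset.mul_sum, Finset.mul_sum, ← Finset.sum_add_distrib]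
      exact Finset.sum_congr rfl fun j _ => by ring
    rw [hexp]
    have h1 := mul_le_mul_of_nonneg_left (hx.1 i) hs
    have h2 := mul_le_mul_of_nonneg_left (hy.1 i) ht
    have h3 : b i = s * b i + t * b i := by rw [← add_mul, hst, one_mul]
    linarith
  · intro j
    exact add_nonneg (mul_nonneg hs (hx.2 j)) (mul_nonneg ht (hy.2 j))

private lemma polyP_sum_mem {A : Matrix (Fin m) (Fin n) ℝ} {b : Fin m → ℝ}
    {ι : Type*} (s : Finset ι) (u : ι → Fin n → ℝ) (lam : ι → ℝ)
    (hmem : ∀ k ∈ s, u k ∈ polyP A b) (h0 : ∀ k ∈ s, 0 ≤ lam k)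
    (h1 : ∑ k ∈ s, lam k = 1) :
    (fun j => ∑ k ∈ s, lam k * u k j) ∈ polyP A b := by
  constructor
  · intro i
    have hswap : ∑ j, A i j * ∑ k ∈ s, lam k * u k j
        = ∑ k ∈ s, lam k * ∑ j, A i j * u k j := by
      simp_rw [Finset.mul_sum]
      rw [Finset.sum_comm]
      exact Finset.sum_congr rfl fun k _ => Finset.sum_congr rfl fun j _ => by ring
    rw [hswap]
    calc b i = ∑ k ∈ s, lam k * b i := by rw [← Finset.sum_mul, h1, one_mul]
    _ ≤ ∑ k ∈ s, lam k * ∑ j, A i j * u k j :=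
      Finset.sum_le_sum fun k hk => mul_le_mul_of_nonneg_left ((hmem k hk).1 i) (h0 k hk)
  · intro j
    exact Finset.sum_nonneg fun k hk => mul_nonneg (h0 k hk) ((hmem k hk).2 j)

/-- no vertex dominates another vertex -/
private lemma vertex_nodom {A : Matrix (Fin m) (Fin n) ℝ} {b : Fin m → ℝ}
    (hA : ∀ i j, 0 ≤ A i j) {u w : Fin n → ℝ}
    (hw : IsVertex (polyP A b) w)
    (huP : u ∈ polyP A b) (hwP : w ∈ polyP A b)
    (hle : ∀ j, u j ≤ w j) : u = w := by
  set w2 : Fin n → ℝ := fun j => 2 * w j - u j with hw2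
  have hw2P : w2 ∈ polyP A b := by
    constructor
    · intro i
      have h1 : ∑ j, A i j * u j ≤ ∑ j, A i j * w j :=
        Finset.sum_le_sum fun j _ => mul_le_mul_of_nonneg_left (hle j) (hA i j)
      have h2 : ∑ j, A i j * w2 j = 2 * (∑ j, A i j * w j) - ∑ j, A i j * u j := by
        rw [Finset.mul_sum, ← Finset.sum_sub_distrib]
        exact Finset.sum_congr rfl fun j _ => by simp only [hw2]; ring
      rw [h2]
      have := hwP.1 i
      linarith
    · intro j
      have := huP.2 j; have := hwP.2 j; have := hle j
      simp only [hw2]; linarith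
  have hmem : w ∈ openSegment ℝ u w2 := by
    refine ⟨1/2, 1/2, by norm_num, by norm_num, by norm_num, funext fun j => ?_⟩
    simp only [Pi.add_apply, Pi.smul_apply, smul_eq_mul, hw2]; ring
  exact hw.2 huP hw2P hmem

private lemma exists_lt_coord {A : Matrix (Fin m) (Fin n) ℝ} {b : Fin m → ℝ}
    (hA : ∀ i j, 0 ≤ A i j) {v v' : Fin n → ℝ} (hne : v ≠ v')
    (hv' : IsVertex (polyP A b) v')
    (hvP : v ∈ polyP A b) (hv'P : v' ∈ polyP A b) :
    ∃ j, v' j < v j := by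
  by_contra hcon
  push_neg at hcon
  exact hne (vertex_nodom hA hv' hvP hv'P hcon)

/-- the measure: number of slack constraints -/
private noncomputable def slackCount (A : Matrix (Fin m) (Fin n) ℝ) (b : Fin m → ℝ)
    (x : Fin n → ℝ) : ℕ :=
  {i | b i < ∑ j, A i j * x j}.ncard + {j | 0 < x j}.ncard

/-- one step towards the boundary -/
private lemma poly_step {A : Matrix (Fin m) (Fin n) ℝ} {b : Fin m → ℝ}
    {x : Fin n → ℝ} (hx : x ∈ polyP A b) {d : Fin n → ℝ}
    (hrow : ∀ i, ∑ j, A i j * x j = b i → ∑ j, A i j * d j = 0)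
    (hcoord : ∀ j, x j = 0 → d j = 0) (hneg : ∃ j, d j < 0) :
    ∃ t, 0 < t ∧ (fun j => x j + t * d j) ∈ polyP A b ∧
      slackCount A b (fun j => x j + t * d j) < slackCount A b x := by
  classical
  obtain ⟨j₁, hj₁⟩ := hneg
  set R : Finset (Fin m) := Finset.univ.filter (fun i => ∑ j, A i j * d j < 0) with hR
  set C : Finset (Fin n) := Finset.univ.filter (fun j => d j < 0) with hC
  set S : Finset ℝ :=
    R.image (fun i => ((∑ j, A i j * x j) - b i) / (-(∑ j, A i j * d j)))
      ∪ C.image (fun j => x j / (-(d j))) with hS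
  have hj₁C : j₁ ∈ C := Finset.mem_filter.2 ⟨Finset.mem_univ _, hj₁⟩
  have hSne : S.Nonempty :=
    ⟨_, Finset.mem_union_right _ (Finset.mem_image_of_mem _ hj₁C)⟩
  set t := S.min' hSne with hts
  have hpos : ∀ y ∈ S, 0 < y := by
    intro y hy
    rcases Finset.mem_union.1 hy with h | h
    · obtain ⟨i, hiR, rfl⟩ := Finset.mem_image.1 h
      have hslope : ∑ j, A i j * d j < 0 := (Finset.mem_filter.1 hiR).2
      have hslack : b i < ∑ j, A i j * x j := by
        rcases eq_or_lt_of_le (hx.1 i) with h' | h'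
        · exact absurd (hrow i h'.symm) (ne_of_lt hslope)
        · exact h'
      exact div_pos (by linarith) (by linarith)
    · obtain ⟨j, hjC, rfl⟩ := Finset.mem_image.1 h
      have hdj : d j < 0 := (Finset.mem_filter.1 hjC).2
      have hxj : 0 < x j := by
        rcases eq_or_lt_of_le (hx.2 j) with h' | h'
        · exact absurd (hcoord j h'.symm) (ne_of_lt hdj)
        · exact h'
      exact div_pos hxj (by linarith)
  have ht0 : 0 < t := (Finset.lt_min'_iff S hSne).2 hpos
  have hmem : (fun j => x j + t * d j) ∈ polyP A b := by
    constructor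
    · intro i
      rw [rowexp]
      rcases le_or_gt 0 (∑ j, A i j * d j) with hs | hs
      · nlinarith [hx.1 i, mul_nonneg ht0.le hs]
      · have hiR : i ∈ R := Finset.mem_filter.2 ⟨Finset.mem_univ _, hs⟩
        have hle : t ≤ ((∑ j, A i j * x j) - b i) / (-(∑ j, A i j * d j)) :=
          Finset.min'_le _ _ (Finset.mem_union_left _ (Finset.mem_image_of_mem _ hiR))
        have := (le_div_iff₀ (by linarith : (0:ℝ) < -(∑ j, A i j * d j))).1 hle
        nlinarith
    · intro j
      show (0:ℝ) ≤ x j + t * d j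
      rcases le_or_gt 0 (d j) with hs | hs
      · nlinarith [hx.2 j, mul_nonneg ht0.le hs]
      · have hjC : j ∈ C := Finset.mem_filter.2 ⟨Finset.mem_univ _, hs⟩
        have hle : t ≤ x j / (-(d j)) :=
          Finset.min'_le _ _ (Finset.mem_union_right _ (Finset.mem_image_of_mem _ hjC))
        have := (le_div_iff₀ (by linarith : (0:ℝ) < -(d j))).1 hle
        nlinarith
  refine ⟨t, ht0, hmem, ?_⟩
  have hsubR : {i | b i < ∑ j, A i j * (x j + t * d j)} ⊆ {i | b i < ∑ j, A i j * x j} := by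
    intro i hi
    simp only [Set.mem_setOf_eq] at hi ⊢
    rcases eq_or_lt_of_le (hx.1 i) with h' | h'
    · exfalso
      have h0 := hrow i h'.symm
      rw [rowexp, h0, mul_zero, add_zero, ← h'] at hi
      exact lt_irrefl _ hi
    · exact h'
  have hsubC : {j | 0 < x j + t * d j} ⊆ {j | 0 < x j} := by
    intro j hj
    simp only [Set.mem_setOf_eq] at hj ⊢
    rcases eq_or_lt_of_le (hx.2 j) with h' | h'
    · exfalso
      have h0 := hcoord j h'.symm
      rw [h0, mul_zero, add_zero, ← h'] at hj
      exact lt_irrefl _ hj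
    · exact h'
  have hmin : t ∈ S := Finset.min'_mem S hSne
  have key : ({i | b i < ∑ j, A i j * (x j + t * d j)}.ncard
        < {i | b i < ∑ j, A i j * x j}.ncard)
      ∨ ({j | 0 < x j + t * d j}.ncard < {j | 0 < x j}.ncard) := by
    rcases Finset.mem_union.1 hmin with h | h
    · left
      obtain ⟨i₀, hi₀R, hi₀eq⟩ := Finset.mem_image.1 h
      have hslope : ∑ j, A i₀ j * d j < 0 := (Finset.mem_filter.1 hi₀R).2
      have hslack : b i₀ < ∑ j, A i₀ j * x j := by
        rcases eq_or_lt_of_le (hx.1 i₀) with h' | h'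
        · exact absurd (hrow i₀ h'.symm) (ne_of_lt hslope)
        · exact h'
      have htight : ∑ j, A i₀ j * (x j + t * d j) = b i₀ := by
        rw [rowexp]
        have hne0 : -(∑ j, A i₀ j * d j) ≠ 0 := by linarith
        have : t * (-(∑ j, A i₀ j * d j)) = (∑ j, A i₀ j * x j) - b i₀ := by
          rw [← hi₀eq]
          exact div_mul_cancel₀ _ hne0
        linear_combination -this
      refine Set.ncard_lt_ncard ⟨hsubR, fun hall => ?_⟩ (Set.toFinite _)
      have hmem2 : b i₀ < ∑ j, A i₀ j * (x j + t * d j) :=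
        hall (show i₀ ∈ {i | b i < ∑ j, A i j * x j} from hslack)
      rw [htight] at hmem2
      exact lt_irrefl _ hmem2
    · right
      obtain ⟨j₀, hj₀C, hj₀eq⟩ := Finset.mem_image.1 h
      have hdj : d j₀ < 0 := (Finset.mem_filter.1 hj₀C).2
      have hxj : 0 < x j₀ := by
        rcases eq_or_lt_of_le (hx.2 j₀) with h' | h'
        · exact absurd (hcoord j₀ h'.symm) (ne_of_lt hdj)
        · exact h'
      have htight : x j₀ + t * d j₀ = 0 := by
        have hne0 : -(d j₀) ≠ 0 := by linarith
        have : t * (-(d j₀)) = x j₀ := by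
          rw [← hj₀eq]
          exact div_mul_cancel₀ _ hne0
        linear_combination -this
      refine Set.ncard_lt_ncard ⟨hsubC, fun hall => ?_⟩ (Set.toFinite _)
      have hmem2 : 0 < x j₀ + t * d j₀ :=
        hall (show j₀ ∈ {j | 0 < x j} from hxj)
      rw [htight] at hmem2
      exact lt_irrefl _ hmem2
  have hR' := Set.ncard_le_ncard hsubR (Set.toFinite _)
  have hC' := Set.ncard_le_ncard hsubC (Set.toFinite _)
  show {i | b i < ∑ j, A i j * (x j + t * d j)}.ncard + {j | 0 < x j + t * d j}.ncard
      < {i | b i < ∑ j, A i j * x j}.ncard + {j | 0 < x j}.ncard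
  rcases key with h | h
  · omega
  · omega

/-- a convex-combination-of-vertices lying below x -/
private def VCombo (A : Matrix (Fin m) (Fin n) ℝ) (b : Fin m → ℝ) (x : Fin n → ℝ) : Prop :=
  ∃ (F : Finset (Fin n → ℝ)) (γ : (Fin n → ℝ) → ℝ),
    F.Nonempty ∧ (∀ w ∈ F, IsVertex (polyP A b) w) ∧ (∀ w ∈ F, 0 < γ w) ∧
    (∑ w ∈ F, γ w = 1) ∧ ∀ j, ∑ w ∈ F, γ w * w j ≤ x j

private lemma merge_combo {F1 F2 : Finset (Fin n → ℝ)} {γ1 γ2 : (Fin n → ℝ) → ℝ}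
    (h1 : ∀ w ∈ F1, 0 < γ1 w) (h2 : ∀ w ∈ F2, 0 < γ2 w)
    {p q : ℝ} (hp : 0 < p) (hq : 0 < q) :
    ∃ γ : (Fin n → ℝ) → ℝ, (∀ w ∈ F1 ∪ F2, 0 < γ w) ∧
      ∀ f : (Fin n → ℝ) → ℝ, ∑ w ∈ F1 ∪ F2, γ w * f w
        = p * (∑ w ∈ F1, γ1 w * f w) + q * ∑ w ∈ F2, γ2 w * f w := by
  classical
  refine ⟨fun w => p * (if w ∈ F1 then γ1 w else 0) + q * (if w ∈ F2 then γ2 w else 0),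
    ?_, ?_⟩
  · intro w hw
    show 0 < p * (if w ∈ F1 then γ1 w else 0) + q * (if w ∈ F2 then γ2 w else 0)
    have hn1 : (0:ℝ) ≤ p * (if w ∈ F1 then γ1 w else 0) := by
      by_cases h' : w ∈ F1
      · simp only [h', if_true]; exact (mul_pos hp (h1 w h')).le
      · simp [h']
    have hn2 : (0:ℝ) ≤ q * (if w ∈ F2 then γ2 w else 0) := by
      by_cases h' : w ∈ F2
      · simp only [h', if_true]; exact (mul_pos hq (h2 w h')).le
      · simp [h']
    rcases Finset.mem_union.1 hw with h | h
    · have hs1 : 0 < p * (if w ∈ F1 then γ1 w else 0) := by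
        simp only [h, if_true]; exact mul_pos hp (h1 w h)
      linarith
    · have hs2 : 0 < q * (if w ∈ F2 then γ2 w else 0) := by
        simp only [h, if_true]; exact mul_pos hq (h2 w h)
      linarith
  · intro f
    have e1 : ∑ w ∈ F1 ∪ F2, (if w ∈ F1 then γ1 w * f w else 0) = ∑ w ∈ F1, γ1 w * f w := by
      rw [Finset.sum_ite_mem, Finset.union_inter_cancel_left]
    have e2 : ∑ w ∈ F1 ∪ F2, (if w ∈ F2 then γ2 w * f w else 0) = ∑ w ∈ F2, γ2 w * f w := by
      rw [Finset.sum_ite_mem, Finset.union_inter_cancel_right]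
    calc ∑ w ∈ F1 ∪ F2,
        (p * (if w ∈ F1 then γ1 w else 0) + q * (if w ∈ F2 then γ2 w else 0)) * f w
        = ∑ w ∈ F1 ∪ F2, (p * (if w ∈ F1 then γ1 w * f w else 0)
            + q * (if w ∈ F2 then γ2 w * f w else 0)) := by
          refine Finset.sum_congr rfl fun w _ => ?_
          by_cases hw1 : w ∈ F1 <;> by_cases hw2 : w ∈ F2 <;> simp [hw1, hw2] <;> ring
      _ = p * (∑ w ∈ F1, γ1 w * f w) + q * ∑ w ∈ F2, γ2 w * f w := by
          rw [Finset.sum_add_distrib, ← Finset.mul_sum, ← Finset.mul_sum, e1, e2]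



private lemma vcombo_of_mem {A : Matrix (Fin m) (Fin n) ℝ} {b : Fin m → ℝ}
    (hA : ∀ i j, 0 ≤ A i j) :
    ∀ N, ∀ x, x ∈ polyP A b → slackCount A b x < N → VCombo A b x := by
  intro N
  induction N with
  | zero => intro x _ h; exact absurd h (Nat.not_lt_zero _)
  | succ N ih =>
    intro x hxP hxN
    classical
    by_cases hvx : IsVertex (polyP A b) x
    · refine ⟨{x}, fun _ => 1, Finset.singleton_nonempty x, ?_, ?_, by simp, fun j => by simp⟩
      · intro w hw; rw [Finset.mem_singleton] at hw; subst hw; exact hvx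
      · intro w _; norm_num
    · have hvx' : ¬ ∀ x₁ ∈ polyP A b, ∀ x₂ ∈ polyP A b,
          x ∈ openSegment ℝ x₁ x₂ → x₁ = x ∧ x₂ = x := fun h => hvx ⟨hxP, fun x₁ h1 x₂ h2 hs => (h x₁ h1 x₂ h2 hs).1⟩
      push_neg at hvx'
      obtain ⟨a, haP, c, hcP, hseg, hne2⟩ := hvx'
      obtain ⟨pp, qq, hpp, hqq, hppqq, heq⟩ := hseg
      have heqj : ∀ j, pp * a j + qq * c j = x j := by
        intro j
        have := congrFun heq j
        simpa [Pi.add_apply, Pi.smul_apply, smul_eq_mul] using this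
      have hax : a ≠ x := by
        intro h
        refine hne2 h ?_
        funext j
        have h1 := heqj j
        rw [h] at h1
        have hxx : pp * x j + qq * x j = x j := by rw [← add_mul, hppqq, one_mul]
        have : qq * c j = qq * x j := by linarith
        exact mul_left_cancel₀ (ne_of_gt hqq) this
      have hac : a ≠ c := by
        intro h
        apply hax
        funext j
        have h1 := heqj j
        rw [← h] at h1
        have hxx : pp * a j + qq * a j = a j := by rw [← add_mul, hppqq, one_mul]
        linarith
      set d : Fin n → ℝ := fun j => c j - a j with hd
      have hdne : ∃ j, d j ≠ 0 := by
        by_contra hcon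
        push_neg at hcon
        exact hac (funext fun j => by have := hcon j; simp [hd] at this; linarith)
      have hmin0 : 0 < min pp qq := lt_min hpp hqq
      set ε : ℝ := min pp qq / 2 with hε
      have hε0 : 0 < ε := by rw [hε]; positivity
      have hεhalf : ε < min pp qq := by rw [hε]; exact half_lt_self hmin0
      have hεp : ε < pp := lt_of_lt_of_le hεhalf (min_le_left pp qq)
      have hεq : ε < qq := lt_of_lt_of_le hεhalf (min_le_right pp qq)
      have hp1 : (fun j => x j + ε * d j) ∈ polyP A b := by
        have hmem := polyP_two_mem haP hcP (s := pp - ε) (t := qq + ε)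
          (by linarith) (by linarith) (by linarith)
        convert hmem using 1
        funext j
        have := heqj j
        simp only [hd]
        linarith
      have hp2 : (fun j => x j + (-ε) * d j) ∈ polyP A b := by
        have hmem := polyP_two_mem haP hcP (s := pp + ε) (t := qq - ε)
          (by linarith) (by linarith) (by linarith)
        convert hmem using 1
        funext j
        have := heqj j
        simp only [hd]
        linarith
      have htrow : ∀ i, ∑ j, A i j * x j = b i → ∑ j, A i j * d j = 0 := by
        intro i hi
        have h1 := hp1.1 i
        have h2 := hp2.1 i
        rw [rowexp, hi] at h1 h2
        have hu : 0 ≤ ε * ∑ j, A i j * d j := by linarith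
        have hl : ε * ∑ j, A i j * d j ≤ 0 := by nlinarith
        have h0 : ε * ∑ j, A i j * d j = 0 := le_antisymm hl hu
        exact (mul_eq_zero.1 h0).resolve_left (ne_of_gt hε0)
      have htcoord : ∀ j, x j = 0 → d j = 0 := by
        intro j hj
        have h1 := hp1.2 j
        have h2 := hp2.2 j
        simp only [hj, zero_add] at h1 h2
        have hu : 0 ≤ ε * d j := h1
        have hl : ε * d j ≤ 0 := by nlinarith
        have h0 : ε * d j = 0 := le_antisymm hl hu
        exact (mul_eq_zero.1 h0).resolve_left (ne_of_gt hε0)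
      have htrow' : ∀ i, ∑ j, A i j * x j = b i → ∑ j, A i j * (fun j => -(d j)) j = 0 := by
        intro i hi
        have := htrow i hi
        simp only [mul_neg]
        rw [Finset.sum_neg_distrib, this, neg_zero]
      have htcoord' : ∀ j, x j = 0 → (fun j => -(d j)) j = 0 := by
        intro j hj
        simp [htcoord j hj]
      by_cases hbneg : ∃ j, d j < 0 <;> by_cases hbpos : ∃ j, 0 < d j
      · -- both directions leave
        obtain ⟨t₁, ht₁, hm1, hs1⟩ := poly_step hxP htrow htcoord hbneg
        obtain ⟨t₂, ht₂, hm2, hs2⟩ := poly_step hxP htrow' htcoord'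
          (by obtain ⟨j, hj⟩ := hbpos; exact ⟨j, by simpa using hj⟩)
        obtain ⟨F1, γ1, hne1, hvert1, hpos1, hsum1, hle1⟩ := ih _ hm1 (by omega)
        obtain ⟨F2, γ2, hne2', hvert2, hpos2, hsum2, hle2⟩ := ih _ hm2 (by omega)
        have ht12 : 0 < t₁ + t₂ := by linarith
        obtain ⟨γ, hposG, hvalG⟩ := merge_combo hpos1 hpos2
          (div_pos ht₂ ht12) (div_pos ht₁ ht12)
        refine ⟨F1 ∪ F2, γ, Finset.Nonempty.inl hne1, ?_, hposG, ?_, fun j => ?_⟩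
        · intro w hw
          rcases Finset.mem_union.1 hw with h | h
          exacts [hvert1 w h, hvert2 w h]
        · have := hvalG (fun _ => 1)
          simp only [mul_one] at this
          rw [this, hsum1, hsum2]
          field_simp
          try ring
        · have e1 := hle1 j
          have e2 := hle2 j
          simp only at e1 e2
          rw [hvalG (fun w => w j)]
          have k1 := mul_le_mul_of_nonneg_left e1 (le_of_lt (div_pos ht₂ ht12))
          have k2 := mul_le_mul_of_nonneg_left e2 (le_of_lt (div_pos ht₁ ht12))
          have hid : t₂ / (t₁ + t₂) * (x j + t₁ * d j)
              + t₁ / (t₁ + t₂) * (x j + t₂ * -(d j)) = x j := by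
            field_simp
            ring
          linarith
      · -- only a negative direction: x' ≤ x
        obtain ⟨t₁, ht₁, hm1, hs1⟩ := poly_step hxP htrow htcoord hbneg
        obtain ⟨F1, γ1, hne1, hvert1, hpos1, hsum1, hle1⟩ := ih _ hm1 (by omega)
        push_neg at hbpos
        refine ⟨F1, γ1, hne1, hvert1, hpos1, hsum1, fun j => ?_⟩
        have := hle1 j
        simp only at this
        nlinarith [hbpos j, ht₁]
      · -- only a positive direction: use -d
        obtain ⟨t₂, ht₂, hm2, hs2⟩ := poly_step hxP htrow' htcoord'
          (by obtain ⟨j, hj⟩ := hbpos; exact ⟨j, by simpa using hj⟩)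
        obtain ⟨F2, γ2, hne2', hvert2, hpos2, hsum2, hle2⟩ := ih _ hm2 (by omega)
        push_neg at hbneg
        refine ⟨F2, γ2, hne2', hvert2, hpos2, hsum2, fun j => ?_⟩
        have := hle2 j
        simp only at this
        nlinarith [hbneg j, ht₂]
      · exfalso
        push_neg at hbneg hbpos
        obtain ⟨j, hj⟩ := hdne
        exact hj (le_antisymm (hbpos j) (hbneg j))

private lemma two_rep {v v' : Fin n → ℝ} (hne : v ≠ v') {F : Finset (Fin n → ℝ)} {γ : (Fin n → ℝ) → ℝ}
    (hFne : F.Nonempty) (hsub : ∀ w ∈ F, w = v ∨ w = v')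
    (hsum : ∑ w ∈ F, γ w = 1) (hpos : ∀ w ∈ F, 0 < γ w) :
    ∃ θ : ℝ, 0 ≤ θ ∧ θ ≤ 1 ∧ ∀ j, ∑ w ∈ F, γ w * w j = θ * v j + (1 - θ) * v' j := by
  classical
  by_cases hvF : v ∈ F <;> by_cases hv'F : v' ∈ F
  · -- F = {v, v'}
    have hFeq : F = {v, v'} := by
      apply Finset.Subset.antisymm
      · intro w hw
        rcases hsub w hw with h | h <;> simp [h]
      · intro w hw
        rcases Finset.mem_insert.1 hw with h | h
        · subst h; exact hvF
        · rw [Finset.mem_singleton] at h; subst h; exact hv'F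
    subst hFeq
    have hsum' : γ v + γ v' = 1 := by rwa [Finset.sum_pair hne] at hsum
    refine ⟨γ v, (hpos v hvF).le, by linarith [hpos v' hv'F], fun j => ?_⟩
    rw [Finset.sum_pair hne]
    have : 1 - γ v = γ v' := by linarith
    rw [this]
  · -- F = {v}
    have hFeq : F = {v} := by
      apply Finset.Subset.antisymm
      · intro w hw
        rcases hsub w hw with h | h
        · simp [h]
        · subst h; exact absurd hw hv'F
      · intro w hw
        rw [Finset.mem_singleton] at hw; subst hw; exact hvF
    subst hFeq
    rw [Finset.sum_singleton] at hsum
    refine ⟨1, zero_le_one, le_refl 1, fun j => ?_⟩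
    rw [Finset.sum_singleton, hsum]
    ring
  · -- F = {v'}
    have hFeq : F = {v'} := by
      apply Finset.Subset.antisymm
      · intro w hw
        rcases hsub w hw with h | h
        · subst h; exact absurd hw hvF
        · simp [h]
      · intro w hw
        rw [Finset.mem_singleton] at hw; subst hw; exact hv'F
    subst hFeq
    rw [Finset.sum_singleton] at hsum
    refine ⟨0, le_refl 0, zero_le_one, fun j => ?_⟩
    rw [Finset.sum_singleton, hsum]
    ring
  · exfalso
    obtain ⟨w, hw⟩ := hFne
    rcases hsub w hw with h | h <;> subst h
    exacts [hvF hw, hv'F hw]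

set_option maxHeartbeats 1600000 in
private lemma key_subset {A : Matrix (Fin m) (Fin n) ℝ} {b : Fin m → ℝ}
    (hA : ∀ i j, 0 ≤ A i j) {v v' : Fin n → ℝ} (hne : v ≠ v')
    (hv : IsVertex (polyP A b) v) (hv' : IsVertex (polyP A b) v')
    (H : ∀ (L : ℕ) (u : Fin L → (Fin n → ℝ)) (lam : Fin L → ℝ),
        (∀ k, IsVertex (polyP A b) (u k)) → Function.Injective u →
        (∀ k, 0 < lam k ∧ lam k < 1) → ∑ k, lam k = 1 →
        (∀ j, ∑ k, lam k * u k j ≤ (v j + v' j) / 2) →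
        L = 2 ∧ Set.range u = {v, v'})
    (F : Finset (Fin n → ℝ)) (γ : (Fin n → ℝ) → ℝ)
    (hFne : F.Nonempty) (hFvert : ∀ w ∈ F, IsVertex (polyP A b) w)
    (hpos : ∀ w ∈ F, 0 < γ w) (hsum : ∑ w ∈ F, γ w = 1)
    (hdom : ∀ j, ∑ w ∈ F, γ w * w j ≤ (v j + v' j) / 2) :
    ∀ w ∈ F, w = v ∨ w = v' := by
  classical
  rcases eq_or_lt_of_le (Finset.one_le_card.2 hFne) with hcard | hcard
  · -- singleton case: always contradictory
    exfalso
    obtain ⟨u, hu⟩ := Finset.card_eq_one.1 hcard.symm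
    subst hu
    rw [Finset.sum_singleton] at hsum
    have hum : ∀ j, u j ≤ (v j + v' j) / 2 := by
      intro j
      have := hdom j
      rwa [Finset.sum_singleton, hsum, one_mul] at this
    have huV : IsVertex (polyP A b) u := hFvert u (Finset.mem_singleton_self u)
    by_cases huv : u = v
    · subst huv
      have hle : ∀ j, u j ≤ v' j := fun j => by have := hum j; linarith
      exact hne (vertex_nodom hA hv' huV.1 hv'.1 hle)
    by_cases huv' : u = v'
    · subst huv'
      have hle : ∀ j, u j ≤ v j := fun j => by have := hum j; linarith
      exact (Ne.symm hne) (vertex_nodom hA hv huV.1 hv.1 hle)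
    · have h3 := H 3 ![u, v, v'] ![1/2, 1/4, 1/4]
        (by
          intro k
          fin_cases k <;> simp [Matrix.cons_val_zero, Matrix.cons_val_one, Matrix.head_cons]
          exacts [huV, hv, hv'])
        (by
          intro k k' hkk'
          fin_cases k <;> fin_cases k' <;>
            simp_all [Matrix.cons_val_zero, Matrix.cons_val_one, Matrix.head_cons] <;>
            first
              | rfl
              | exact absurd hkk' huv
              | exact absurd hkk' huv'
              | exact absurd hkk'.symm huv
              | exact absurd hkk'.symm huv'
              | exact absurd hkk' hne
              | exact absurd hkk'.symm hne)
        (by intro k; fin_cases k <;> norm_num)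
        (by rw [Fin.sum_univ_three]; norm_num [Matrix.cons_val_two, Matrix.tail_cons, Matrix.head_cons])
        (by
          intro j
          rw [Fin.sum_univ_three]
          have := hum j
          simp only [Matrix.cons_val_zero, Matrix.cons_val_one, Matrix.head_cons,
            Matrix.cons_val_two, Matrix.tail_cons]
          linarith)
      exact absurd h3.1 (by norm_num)
  · -- at least two elements
    set e := F.equivFin with he
    have h2 := H F.card (fun k => ((e.symm k : F) : Fin n → ℝ)) (fun k => γ (e.symm k))
      (fun k => hFvert _ (e.symm k).2)
      (Subtype.val_injective.comp e.symm.injective)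
      (by
        intro k
        refine ⟨hpos _ (e.symm k).2, ?_⟩
        obtain ⟨w', hw'F, hw'ne⟩ := Finset.exists_mem_ne hcard (e.symm k : F)
        have hpair : γ ((e.symm k : F) : Fin n → ℝ) + γ w' ≤ ∑ w ∈ F, γ w := by
          have hsubset : ({((e.symm k : F) : Fin n → ℝ), w'} : Finset (Fin n → ℝ)) ⊆ F := by
            intro w hw
            rcases Finset.mem_insert.1 hw with h | h
            · subst h; exact (e.symm k).2
            · rw [Finset.mem_singleton] at h; subst h; exact hw'F
          calc γ ((e.symm k : F) : Fin n → ℝ) + γ w'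
              = ∑ w ∈ ({((e.symm k : F) : Fin n → ℝ), w'} : Finset (Fin n → ℝ)), γ w :=
                (Finset.sum_pair (Ne.symm hw'ne)).symm
            _ ≤ ∑ w ∈ F, γ w :=
                Finset.sum_le_sum_of_subset_of_nonneg hsubset
                  (fun w hwF _ => (hpos w hwF).le)
        have := hpos w' hw'F
        rw [hsum] at hpair
        linarith)
      (by
        rw [← hsum, ← Finset.sum_coe_sort F γ]
        exact Equiv.sum_comp e.symm (fun x : F => γ (x : Fin n → ℝ)))
      (by
        intro j
        have : ∑ k, γ ((e.symm k : F) : Fin n → ℝ) * ((e.symm k : F) : Fin n → ℝ) j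
            = ∑ w ∈ F, γ w * w j := by
          rw [← Finset.sum_coe_sort F (fun w => γ w * w j)]
          exact Equiv.sum_comp e.symm (fun x : F => γ (x : Fin n → ℝ) * (x : Fin n → ℝ) j)
        rw [this]
        exact hdom j)
    have hr : Set.range (fun k => ((e.symm k : F) : Fin n → ℝ)) = (F : Set (Fin n → ℝ)) := by
      have : Set.range (fun k => ((e.symm k : F) : Fin n → ℝ))
          = Set.range ((↑) : F → (Fin n → ℝ)) :=
        Function.Surjective.range_comp e.symm.surjective _
      rw [this, Subtype.range_coe]
    intro w hw
    have : w ∈ ({v, v'} : Set (Fin n → ℝ)) := by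
      rw [← h2.2, hr]
      exact hw
    simpa using this


end Stmt0Aux

/-- vertices `v ≠ v'` of `P = {x | Ax ≥ b, x ≥ 0}` (with `A ≥ 0`, `b ≥ 0`)
are adjacent iff every strict convex combination of vertices of `P` dominated by
`(v+v')/2` consists exactly of `v` and `v'`. -/
theorem stmt0 {m n : ℕ} (A : Matrix (Fin m) (Fin n) ℝ) (b : Fin m → ℝ)
    (hA : ∀ i j, 0 ≤ A i j) (hb : ∀ i, 0 ≤ b i)
    (v v' : Fin n → ℝ) (hne : v ≠ v')
    (hv : IsVertex (polyP A b) v) (hv' : IsVertex (polyP A b) v') :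
    AdjacentVerts (polyP A b) v v' ↔
      ∀ (L : ℕ) (u : Fin L → (Fin n → ℝ)) (lam : Fin L → ℝ),
        (∀ k, IsVertex (polyP A b) (u k)) → Function.Injective u →
        (∀ k, 0 < lam k ∧ lam k < 1) → ∑ k, lam k = 1 →
        (∀ j, ∑ k, lam k * u k j ≤ (v j + v' j) / 2) →
        L = 2 ∧ Set.range u = {v, v'} := by
  classical
  have hvP : v ∈ polyP A b := hv.1
  have hv'P : v' ∈ polyP A b := hv'.1
  have hconv : Convex ℝ (polyP A b) := by
    intro x hx y hy s t hs ht hst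
    exact polyP_two_mem hx hy hs ht hst
  constructor
  · -- adjacency implies the combinatorial property
    intro hadj L u lam hvert hinj hlam hsum hdom
    obtain ⟨hnevv, _, _, hext⟩ := hadj
    have hL2 : 2 ≤ L := by
      rcases L with _ | _ | L
      · exfalso; simp at hsum
      · exfalso
        have h1 : lam 0 = 1 := by simpa using hsum
        have := (hlam 0).2
        rw [h1] at this
        exact lt_irrefl _ this
      · omega
    set y : Fin n → ℝ := fun j => ∑ k, lam k * u k j with hy
    have hyP : y ∈ polyP A b := polyP_sum_mem Finset.univ u lam
      (fun k _ => (hvert k).1) (fun k _ => (hlam k).1.le) hsum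
    set mid : Fin n → ℝ := fun j => (v j + v' j) / 2 with hmid
    have hmidseg : mid ∈ segment ℝ v v' :=
      ⟨1/2, 1/2, by norm_num, by norm_num, by norm_num,
        funext fun j => by simp [hmid, Pi.add_apply, Pi.smul_apply, smul_eq_mul]; ring⟩
    have hmidP : mid ∈ polyP A b := hext.1 hmidseg
    have hylemid : ∀ j, y j ≤ mid j := fun j => hdom j
    set y' : Fin n → ℝ := fun j => 2 * mid j - y j with hy'
    have hy'P : y' ∈ polyP A b := by
      constructor
      · intro i
        have h1 : ∑ j, A i j * y j ≤ ∑ j, A i j * mid j :=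
          Finset.sum_le_sum fun j _ => mul_le_mul_of_nonneg_left (hylemid j) (hA i j)
        have h2 : ∑ j, A i j * y' j = 2 * (∑ j, A i j * mid j) - ∑ j, A i j * y j := by
          rw [Finset.mul_sum, ← Finset.sum_sub_distrib]
          exact Finset.sum_congr rfl fun j _ => by simp only [hy']; ring
        rw [h2]
        have := hmidP.1 i
        linarith
      · intro j
        have h1 := hmidP.2 j
        have h2 := hylemid j
        simp only [hy']
        linarith
    have hyseg : y ∈ segment ℝ v v' := by
      have hopen : mid ∈ openSegment ℝ y y' :=
        ⟨1/2, 1/2, by norm_num, by norm_num, by norm_num,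
          funext fun j => by simp [hy', Pi.add_apply, Pi.smul_apply, smul_eq_mul]; ring⟩
      exact hext.2 hyP hy'P hmidseg hopen
    have huseg : ∀ k, u k ∈ segment ℝ v v' := by
      intro k
      have hlamk := hlam k
      have h1k : (0:ℝ) < 1 - lam k := by linarith [hlamk.2]
      set r : Fin n → ℝ :=
        fun j => ∑ k' ∈ Finset.univ.erase k, lam k' / (1 - lam k) * u k' j with hr
      have herase : ∑ k' ∈ Finset.univ.erase k, lam k' = 1 - lam k := by
        have h := Finset.sum_erase_add Finset.univ lam (Finset.mem_univ k)
        rw [hsum] at h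
        linarith
      have hrsum : ∑ k' ∈ Finset.univ.erase k, lam k' / (1 - lam k) = 1 := by
        rw [← Finset.sum_div, herase]
        field_simp
      have hrP : r ∈ polyP A b := polyP_sum_mem _ u _ (fun k' _ => (hvert k').1)
        (fun k' _ => div_nonneg (hlam k').1.le h1k.le) hrsum
      have hyeq : y ∈ openSegment ℝ (u k) r := by
        refine ⟨lam k, 1 - lam k, hlamk.1, h1k, by ring, funext fun j => ?_⟩
        simp only [Pi.add_apply, Pi.smul_apply, smul_eq_mul, hr, hy]
        rw [Finset.mul_sum]
        have hcongr : ∀ k' ∈ Finset.univ.erase k,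
            (1 - lam k) * (lam k' / (1 - lam k) * u k' j) = lam k' * u k' j :=
          fun k' _ => by field_simp
        rw [Finset.sum_congr rfl hcongr, add_comm]
        exact Finset.sum_erase_add Finset.univ (fun k' => lam k' * u k' j) (Finset.mem_univ k)
      exact hext.2 ((hvert k).1) hrP hyseg hyeq
    have humem : ∀ k, u k = v ∨ u k = v' := by
      intro k
      obtain ⟨p, q, hp, hq, hpq, heq⟩ := huseg k
      have heqj : ∀ j, p * v j + q * v' j = u k j := fun j => by
        have := congrFun heq j
        simpa [Pi.add_apply, Pi.smul_apply, smul_eq_mul] using this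
      rcases eq_or_lt_of_le hp with hp0 | hp0
      · right
        funext j
        have := heqj j
        rw [← hp0] at this
        have hq1 : q = 1 := by linarith
        rw [hq1] at this
        linarith
      rcases eq_or_lt_of_le hq with hq0 | hq0
      · left
        funext j
        have := heqj j
        rw [← hq0] at this
        have hp1 : p = 1 := by linarith
        rw [hp1] at this
        linarith
      · exfalso
        have hmem : u k ∈ openSegment ℝ v v' := ⟨p, q, hp0, hq0, hpq, heq⟩
        have h := (hvert k).2 hvP hv'P hmem
        exact hnevv (h.trans ((hvert k).2 hv'P hvP (by rw [openSegment_symm]; exact hmem)).symm)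
    have hL : L = 2 := by
      have himg : (Finset.univ.image u) ⊆ ({v, v'} : Finset (Fin n → ℝ)) := by
        intro w hw
        obtain ⟨k, _, rfl⟩ := Finset.mem_image.1 hw
        rcases humem k with h | h <;> simp [h]
      have hcard1 : (Finset.univ.image u).card = L := by
        rw [Finset.card_image_of_injective _ hinj, Finset.card_univ, Fintype.card_fin]
      have hcard2 : ({v, v'} : Finset (Fin n → ℝ)).card ≤ 2 := by
        apply le_trans (Finset.card_insert_le _ _)
        simp
      have := Finset.card_le_card himg
      omega
    subst hL
    refine ⟨rfl, ?_⟩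
    apply Set.Subset.antisymm
    · rintro w ⟨k, rfl⟩
      rcases humem k with h | h <;> simp [h]
    · have h01 : (0 : Fin 2) ≠ 1 := by norm_num
      intro w hw
      rcases hw with rfl | hw
      · rcases humem 0 with h0 | h0
        · exact ⟨0, h0⟩
        · rcases humem 1 with h1 | h1
          · exact ⟨1, h1⟩
          · exact absurd (hinj (h0.trans h1.symm)) h01
      · rw [Set.mem_singleton_iff] at hw
        subst hw
        rcases humem 0 with h0 | h0
        · rcases humem 1 with h1 | h1
          · exact absurd (hinj (h0.trans h1.symm)) h01
          · exact ⟨1, h1⟩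
        · exact ⟨0, h0⟩
  · -- the combinatorial property implies adjacency
    intro H
    refine ⟨hne, hv, hv', hconv.segment_subset hvP hv'P, ?_⟩
    intro x1 hx1 x2 hx2 z hzseg hzopen
    obtain ⟨θ, θ', hθ, hθ', hθθ, hzeq⟩ := hzseg
    have hzeqj : ∀ j, θ * v j + θ' * v' j = z j := fun j => by
      have := congrFun hzeq j
      simpa [Pi.add_apply, Pi.smul_apply, smul_eq_mul] using this
    rcases eq_or_lt_of_le hθ with hθ0 | hθ0
    · -- θ = 0, z = v'
      have hzv' : z = v' := by
        funext j
        have h1 := hzeqj j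
        rw [← hθ0] at h1
        have hθ'1 : θ' = 1 := by linarith
        rw [hθ'1] at h1
        linarith
      rw [hzv'] at hzopen
      have h := hv'.2 hx1 hx2 hzopen
      rw [h]
      exact right_mem_segment ℝ v v'
    rcases eq_or_lt_of_le hθ' with hθ'0 | hθ'0
    · -- θ' = 0, z = v
      have hzv : z = v := by
        funext j
        have h1 := hzeqj j
        rw [← hθ'0] at h1
        have hθ1 : θ = 1 := by linarith
        rw [hθ1] at h1
        linarith
      rw [hzv] at hzopen
      have h := hv.2 hx1 hx2 hzopen
      rw [h]
      exact left_mem_segment ℝ v v'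
    · -- z is in the relative interior of the segment
      obtain ⟨p, q, hp, hq, hpq, hzeq2⟩ := hzopen
      have hzeq2j : ∀ j, p * x1 j + q * x2 j = z j := fun j => by
        have := congrFun hzeq2 j
        simpa [Pi.add_apply, Pi.smul_apply, smul_eq_mul] using this
      set zb : Fin n → ℝ := fun j => θ' * v j + θ * v' j with hzb
      have hzbP : zb ∈ polyP A b :=
        polyP_two_mem hvP hv'P hθ' hθ (by linarith)
      have hD : ∀ w, w ∈ polyP A b → VCombo A b w := fun w hw =>
        vcombo_of_mem hA (slackCount A b w + 1) w hw (Nat.lt_succ_self _)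
      obtain ⟨F1, γ1, hFne1, hvert1, hpos1, hsum1, hle1⟩ := hD x1 hx1
      obtain ⟨F2, γ2, hFne2, hvert2, hpos2, hsum2, hle2⟩ := hD x2 hx2
      obtain ⟨F3, γ3, hFne3, hvert3, hpos3, hsum3, hle3⟩ := hD zb hzbP
      obtain ⟨γ12, hpos12, hval12⟩ := merge_combo hpos1 hpos2 hp hq
      obtain ⟨γG, hposG, hvalG⟩ := merge_combo hpos12 hpos3
        (by norm_num : (0:ℝ) < 1/2) (by norm_num : (0:ℝ) < 1/2)
      have hsumG : ∑ w ∈ (F1 ∪ F2) ∪ F3, γG w = 1 := by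
        have h1 := hvalG (fun _ => 1)
        have h2 := hval12 (fun _ => 1)
        simp only [mul_one] at h1 h2
        rw [h1, h2, hsum1, hsum2, hsum3]
        linarith
      have hdomG : ∀ j, ∑ w ∈ (F1 ∪ F2) ∪ F3, γG w * w j ≤ (v j + v' j)/2 := by
        intro j
        rw [hvalG (fun w => w j), hval12 (fun w => w j)]
        have e1 := hle1 j
        have e2 := hle2 j
        have e3 := hle3 j
        simp only [hzb] at e3
        have hz1 := hzeqj j
        have hz2 := hzeq2j j
        have k1 := mul_le_mul_of_nonneg_left e1 hp.le
        have k2 := mul_le_mul_of_nonneg_left e2 hq.le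
        have hid1 : θ * v j + θ' * v j = v j := by rw [← add_mul, hθθ, one_mul]
        have hid2 : θ * v' j + θ' * v' j = v' j := by rw [← add_mul, hθθ, one_mul]
        linarith
      have hsubG := key_subset hA hne hv hv' H ((F1 ∪ F2) ∪ F3) γG
        (hFne3.mono Finset.subset_union_right)
        (by
          intro w hw
          rcases Finset.mem_union.1 hw with h | h
          · rcases Finset.mem_union.1 h with h' | h'
            exacts [hvert1 w h', hvert2 w h']
          · exact hvert3 w h)
        hposG hsumG hdomG
      have hsub1 : ∀ w ∈ F1, w = v ∨ w = v' := fun w hw =>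
        hsubG w (Finset.mem_union_left _ (Finset.mem_union_left _ hw))
      have hsub2 : ∀ w ∈ F2, w = v ∨ w = v' := fun w hw =>
        hsubG w (Finset.mem_union_left _ (Finset.mem_union_right _ hw))
      have hsub3 : ∀ w ∈ F3, w = v ∨ w = v' := fun w hw =>
        hsubG w (Finset.mem_union_right _ hw)
      obtain ⟨θ1, hθ1a, hθ1b, hθ1⟩ := two_rep hne hFne1 hsub1 hsum1 hpos1
      obtain ⟨θ2, hθ2a, hθ2b, hθ2⟩ := two_rep hne hFne2 hsub2 hsum2 hpos2
      obtain ⟨θ3, hθ3a, hθ3b, hθ3⟩ := two_rep hne hFne3 hsub3 hsum3 hpos3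
      set Θ : ℝ := 1/2*(p*θ1 + q*θ2) + 1/2*θ3 with hΘdef
      have hGrep : ∀ j, ∑ w ∈ (F1 ∪ F2) ∪ F3, γG w * w j = Θ * v j + (1-Θ) * v' j := by
        intro j
        rw [hvalG (fun w => w j), hval12 (fun w => w j), hθ1 j, hθ2 j, hθ3 j, hΘdef]
        linear_combination (v' j / 2) * hpq
      obtain ⟨jp, hjp⟩ := exists_lt_coord hA hne hv' hvP hv'P
      obtain ⟨jm, hjm⟩ := exists_lt_coord hA (Ne.symm hne) hv hv'P hvP
      have hΘle : ∀ j, Θ * v j + (1-Θ) * v' j ≤ (v j + v' j)/2 := fun j => by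
        rw [← hGrep j]; exact hdomG j
      have hΘhalf : Θ = 1/2 := by
        have h1 := hΘle jp
        have h2 := hΘle jm
        have ha : Θ ≤ 1/2 := by nlinarith [hjp]
        have hb : 1/2 ≤ Θ := by nlinarith [hjm]
        linarith
      have hsq : ∀ j, x1 j = ∑ w ∈ F1, γ1 w * w j ∧ x2 j = ∑ w ∈ F2, γ2 w * w j := by
        intro j
        have hG := hGrep j
        rw [hΘhalf] at hG
        rw [hvalG (fun w => w j), hval12 (fun w => w j)] at hG
        have e1 := hle1 j
        have e2 := hle2 j
        have e3 := hle3 j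
        simp only [hzb] at e3
        have hz1 := hzeqj j
        have hz2 := hzeq2j j
        have hid1 : θ * v j + θ' * v j = v j := by rw [← add_mul, hθθ, one_mul]
        have hid2 : θ * v' j + θ' * v' j = v' j := by rw [← add_mul, hθθ, one_mul]
        have k1 := mul_le_mul_of_nonneg_left e1 hp.le
        have k2 := mul_le_mul_of_nonneg_left e2 hq.le
        have hup1 : p * x1 j ≤ p * (∑ w ∈ F1, γ1 w * w j) := by linarith
        have hup2 : q * x2 j ≤ q * (∑ w ∈ F2, γ2 w * w j) := by linarith
        constructor
        · exact mul_left_cancel₀ (ne_of_gt hp) (le_antisymm hup1 k1)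
        · exact mul_left_cancel₀ (ne_of_gt hq) (le_antisymm hup2 k2)
      have hx1seg : x1 ∈ segment ℝ v v' := by
        refine ⟨θ1, 1-θ1, hθ1a, by linarith, by ring, funext fun j => ?_⟩
        simp only [Pi.add_apply, Pi.smul_apply, smul_eq_mul]
        have h := (hsq j).1
        rw [hθ1 j] at h
        exact h.symm
      have hx2seg : x2 ∈ segment ℝ v v' := by
        refine ⟨θ2, 1-θ2, hθ2a, by linarith, by ring, funext fun j => ?_⟩
        simp only [Pi.add_apply, Pi.smul_apply, smul_eq_mul]
        have h := (hsq j).2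
        rw [hθ2 j] at h
        exact h.symm
      exact hx1seg
end

section
/- Let A be a binary m×n matrix, v and v' distinct vertices of Q*(A), and G(v,v') their joint saturation graph. If y = Σ λ_k u^k is a strict convex combination of vertices u^1,…,u^ℓ of Q*(A) with y ≤ (v+v')/2, then for each k: (a) supp(u^k) ⊆ supp(v) ∪ supp(v'), and (b) |{p,p'} ∩ supp(u^k)| = 1 whenever p and p' are neighbors in G(v,v'). -/
open Finset

section Stmt2Aux
variable {m n : ℕ} {A : Matrix (Fin m) (Fin n) ℝ}

lemma vertex_mem_S {x : Fin n → ℝ} (hx : IsVertex (Qstar A) x) :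
    (∀ j, ∃ k : ℕ, x j = k) ∧ ∀ i, 1 ≤ ∑ j, A i j * x j := by
  have h : x ∈ {y : Fin n → ℝ | (∀ j, ∃ k : ℕ, y j = k) ∧ ∀ i, 1 ≤ ∑ j, A i j * y j} :=
    extremePoints_convexHull_subset hx
  exact h

lemma S_nonneg {x : Fin n → ℝ} (hx : ∀ j, ∃ k : ℕ, x j = k) (j : Fin n) : 0 ≤ x j := by
  obtain ⟨k, hk⟩ := hx j; rw [hk]; positivity

lemma A_nonneg (hA : IsBinaryMatrix A) (i : Fin m) (j : Fin n) : 0 ≤ A i j := by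
  rcases hA i j with h | h <;> simp [h]

lemma vertex_le_one (hA : IsBinaryMatrix A) {x : Fin n → ℝ} (hx : IsVertex (Qstar A) x)
    (p : Fin n) : x p ≤ 1 := by
  by_contra hgt
  push_neg at hgt
  have hxS := vertex_mem_S hx
  have hnn : ∀ j, 0 ≤ x j := fun j => S_nonneg hxS.1 j
  set e : Fin n → ℝ := fun j => if j = p then 1 else 0 with he
  have hsumE : ∀ i, ∑ j, A i j * e j = A i p := by
    intro i
    simp [he, mul_ite, Finset.sum_ite_eq']
  have hxp2 : (2:ℝ) ≤ x p := by
    obtain ⟨K, hK⟩ := hxS.1 p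
    rw [hK] at hgt ⊢
    have h1 : 1 < K := by exact_mod_cast hgt
    exact_mod_cast h1
  have hsub : (x - e) ∈ {y : Fin n → ℝ | (∀ j, ∃ k : ℕ, y j = k) ∧ ∀ i, 1 ≤ ∑ j, A i j * y j} := by
    constructor
    · intro j
      obtain ⟨K, hK⟩ := hxS.1 j
      by_cases hj : j = p
      · subst hj
        have hK2 : 2 ≤ K := by rw [hK] at hxp2; exact_mod_cast hxp2
        refine ⟨K - 1, ?_⟩
        have : ((K - 1 : ℕ) : ℝ) = (K : ℝ) - 1 := by
          push_cast [Nat.cast_sub (by omega : 1 ≤ K)]; ring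
        simp [he, hK, this]
      · exact ⟨K, by simp [he, hj, hK]⟩
    · intro i
      have hterm : ∑ j, A i j * (x - e) j = (∑ j, A i j * x j) - A i p := by
        simp only [Pi.sub_apply, mul_sub, Finset.sum_sub_distrib, hsumE]
      rw [hterm]
      rcases hA i p with h0 | h1
      · rw [h0]; linarith [hxS.2 i]
      · have hsle : x p ≤ ∑ j, A i j * x j := by
          have := Finset.single_le_sum (f := fun j => A i j * x j)
            (fun j _ => mul_nonneg (A_nonneg hA i j) (hnn j)) (Finset.mem_univ p)
          simpa [h1] using this
        linarith
  have hadd : (x + e) ∈ {y : Fin n → ℝ | (∀ j, ∃ k : ℕ, y j = k) ∧ ∀ i, 1 ≤ ∑ j, A i j * y j} := by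
    constructor
    · intro j
      obtain ⟨K, hK⟩ := hxS.1 j
      by_cases hj : j = p
      · subst hj
        exact ⟨K + 1, by push_cast; simp [he, hK]⟩
      · exact ⟨K, by simp [he, hj, hK]⟩
    · intro i
      have hterm : ∑ j, A i j * (x + e) j = (∑ j, A i j * x j) + A i p := by
        simp only [Pi.add_apply, mul_add, Finset.sum_add_distrib, hsumE]
      rw [hterm]
      have := hxS.2 i
      have := A_nonneg hA i p
      linarith
  have hseg : x ∈ openSegment ℝ (x - e) (x + e) := by
    refine ⟨1/2, 1/2, by norm_num, by norm_num, by norm_num, ?_⟩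
    funext j
    simp only [Pi.smul_apply, Pi.sub_apply, Pi.add_apply, smul_eq_mul]
    ring
  obtain ⟨h1', _⟩ := (mem_extremePoints.1 hx).2 _ (subset_convexHull ℝ _ hsub) _ (subset_convexHull ℝ _ hadd) hseg
  have hcf := congrFun h1' p
  simp [he] at hcf

lemma vertex_binary (hA : IsBinaryMatrix A) {x : Fin n → ℝ} (hx : IsVertex (Qstar A) x) :
    ∀ j, x j = 0 ∨ x j = 1 := by
  intro j
  obtain ⟨K, hK⟩ := (vertex_mem_S hx).1 j
  have h1 : x j ≤ 1 := vertex_le_one hA hx j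
  rw [hK] at h1 ⊢
  have hK1 : K ≤ 1 := by exact_mod_cast h1
  interval_cases K <;> simp

lemma key_edge {L : ℕ} (hA : IsBinaryMatrix A) {v v' : Fin n → ℝ}
    (hvb : ∀ j, v j = 0 ∨ v j = 1) (hv'b : ∀ j, v' j = 0 ∨ v' j = 1)
    {u : Fin L → Fin n → ℝ} {lam : Fin L → ℝ}
    (huS : ∀ k, (∀ j, ∃ K : ℕ, u k j = K) ∧ ∀ i, 1 ≤ ∑ j, A i j * u k j)
    (hub : ∀ k j, u k j = 0 ∨ u k j = 1)
    (hlam : ∀ k, 0 < lam k ∧ lam k < 1) (hsum : ∑ k, lam k = 1)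
    (hle : ∀ j, ∑ k, lam k * u k j ≤ (v j + v' j) / 2)
    (parta : ∀ k, supp (u k) ⊆ supp v ∪ supp v')
    (k : Fin L) {p p' : Fin n} (hpp' : p ≠ p') {t : Fin m}
    (h1 : rowSupp A t ∩ supp v = {p}) (h2 : rowSupp A t ∩ supp v' = {p'}) :
    (({p, p'} : Set (Fin n)) ∩ supp (u k)).ncard = 1 := by
  have hp : p ∈ rowSupp A t ∩ supp v := h1 ▸ rfl
  have hp' : p' ∈ rowSupp A t ∩ supp v' := h2 ▸ rfl
  have hAp : A t p = 1 := (hA t p).resolve_left hp.1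
  have hAp' : A t p' = 1 := (hA t p').resolve_left hp'.1
  have hvp : v p = 1 := (hvb p).resolve_left hp.2
  have hvp' : v' p' = 1 := (hv'b p').resolve_left hp'.2
  have hvz : ∀ j, A t j ≠ 0 → j ≠ p → v j = 0 := by
    intro j hAj hjp
    by_contra hvj
    have hm : j ∈ rowSupp A t ∩ supp v := ⟨hAj, hvj⟩
    rw [h1] at hm
    exact hjp hm
  have hv'z : ∀ j, A t j ≠ 0 → j ≠ p' → v' j = 0 := by
    intro j hAj hjp
    by_contra hvj
    have hm : j ∈ rowSupp A t ∩ supp v' := ⟨hAj, hvj⟩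
    rw [h2] at hm
    exact hjp hm
  have sumv : ∑ j, A t j * v j = 1 := by
    rw [Finset.sum_eq_single p]
    · rw [hAp, hvp]; ring
    · intro b _ hb
      by_cases hAb : A t b = 0
      · rw [hAb]; ring
      · rw [hvz b hAb hb]; ring
    · intro h; exact absurd (Finset.mem_univ p) h
  have sumv' : ∑ j, A t j * v' j = 1 := by
    rw [Finset.sum_eq_single p']
    · rw [hAp', hvp']; ring
    · intro b _ hb
      by_cases hAb : A t b = 0
      · rw [hAb]; ring
      · rw [hv'z b hAb hb]; ring
    · intro h; exact absurd (Finset.mem_univ p') h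
  have rk : ∀ k', (1:ℝ) ≤ ∑ j, A t j * u k' j := fun k' => (huS k').2 t
  have hswap : ∑ k', lam k' * (∑ j, A t j * u k' j) = ∑ j, A t j * (∑ k', lam k' * u k' j) := by
    simp_rw [Finset.mul_sum]
    rw [Finset.sum_comm]
    exact Finset.sum_congr rfl fun j _ => Finset.sum_congr rfl fun k' _ => by ring
  have hub1 : ∑ j, A t j * (∑ k', lam k' * u k' j) ≤ 1 := by
    have hle2 : ∑ j, A t j * (∑ k', lam k' * u k' j) ≤ ∑ j, A t j * ((v j + v' j) / 2) :=
      Finset.sum_le_sum fun j _ => mul_le_mul_of_nonneg_left (hle j) (A_nonneg hA t j)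
    have heq : ∑ j, A t j * ((v j + v' j) / 2) = 1 := by
      have h3 : ∀ j, A t j * ((v j + v' j) / 2) = (A t j * v j + A t j * v' j) / 2 :=
        fun j => by ring
      simp_rw [h3]
      rw [← Finset.sum_div, Finset.sum_add_distrib, sumv, sumv']
      norm_num
    linarith
  have hallone : ∑ j, A t j * u k j = 1 := by
    by_contra hne1
    have hgt : 1 < ∑ j, A t j * u k j := lt_of_le_of_ne (rk k) (Ne.symm hne1)
    have hlt : ∑ k', lam k' * 1 < ∑ k', lam k' * (∑ j, A t j * u k' j) := by
      apply Finset.sum_lt_sum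
      · intro i _; exact mul_le_mul_of_nonneg_left (rk i) (hlam i).1.le
      · exact ⟨k, Finset.mem_univ _, by nlinarith [(hlam k).1]⟩
    simp_rw [mul_one] at hlt
    rw [hsum, hswap] at hlt
    linarith
  have hunn : ∀ j, 0 ≤ u k j := fun j => S_nonneg (huS k).1 j
  rcases hub k p with hp0 | hp1 <;> rcases hub k p' with hq0 | hq1
  · exfalso
    have hex : ∃ j, A t j * u k j ≠ 0 := by
      by_contra hc
      push_neg at hc
      rw [Finset.sum_eq_zero fun j _ => hc j] at hallone
      norm_num at hallone
    obtain ⟨j, hj⟩ := hex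
    have hAj : A t j ≠ 0 := fun h => hj (by rw [h]; ring)
    have huj : u k j ≠ 0 := fun h => hj (by rw [h]; ring)
    rcases parta k huj with hjv | hjv'
    · have hjm : j ∈ rowSupp A t ∩ supp v := ⟨hAj, hjv⟩
      rw [h1] at hjm
      exact huj (hjm ▸ hp0)
    · have hjm : j ∈ rowSupp A t ∩ supp v' := ⟨hAj, hjv'⟩
      rw [h2] at hjm
      exact huj (hjm ▸ hq0)
  · have hset : ({p, p'} : Set (Fin n)) ∩ supp (u k) = {p'} := by
      ext x
      simp only [Set.mem_inter_iff, Set.mem_insert_iff, Set.mem_singleton_iff, supp,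
        Set.mem_setOf_eq]
      constructor
      · rintro ⟨hx1 | hx2, hx3⟩
        · exact absurd (hx1 ▸ hp0) hx3
        · exact hx2
      · rintro rfl
        exact ⟨Or.inr rfl, by rw [hq1]; norm_num⟩
    rw [hset, Set.ncard_singleton]
  · have hset : ({p, p'} : Set (Fin n)) ∩ supp (u k) = {p} := by
      ext x
      simp only [Set.mem_inter_iff, Set.mem_insert_iff, Set.mem_singleton_iff, supp,
        Set.mem_setOf_eq]
      constructor
      · rintro ⟨hx1 | hx2, hx3⟩
        · exact hx1
        · exact absurd (hx2 ▸ hq0) hx3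
      · rintro rfl
        exact ⟨Or.inl rfl, by rw [hp1]; norm_num⟩
    rw [hset, Set.ncard_singleton]
  · exfalso
    have h2le : (2:ℝ) ≤ ∑ j, A t j * u k j := by
      have hss := Finset.sum_le_sum_of_subset_of_nonneg
        (Finset.subset_univ ({p, p'} : Finset (Fin n)))
        (f := fun j => A t j * u k j)
        (fun j _ _ => mul_nonneg (A_nonneg hA t j) (hunn j))
      rw [Finset.sum_pair hpp', hAp, hAp', hp1, hq1] at hss
      linarith
    linarith

end Stmt2Aux

/-- properties of strict convex combinations dominated by `(v+v')/2`. -/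
theorem stmt2 {m n : ℕ} (A : Matrix (Fin m) (Fin n) ℝ) (hA : IsBinaryMatrix A)
    (v v' : Fin n → ℝ) (hne : v ≠ v')
    (hv : IsVertex (Qstar A) v) (hv' : IsVertex (Qstar A) v')
    (L : ℕ) (u : Fin L → (Fin n → ℝ)) (lam : Fin L → ℝ)
    (hu : ∀ k, IsVertex (Qstar A) (u k)) (hinj : Function.Injective u)
    (hlam : ∀ k, 0 < lam k ∧ lam k < 1) (hsum : ∑ k, lam k = 1)
    (hle : ∀ j, ∑ k, lam k * u k j ≤ (v j + v' j) / 2) :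
    ∀ k, supp (u k) ⊆ supp v ∪ supp v' ∧
      ∀ p p', (JSG A v v').Adj p p' →
        (({p, p'} : Set (Fin n)) ∩ supp (u k)).ncard = 1 := by
  intro k
  have huS : ∀ k, (∀ j, ∃ K : ℕ, u k j = K) ∧ ∀ i, 1 ≤ ∑ j, A i j * u k j :=
    fun k => vertex_mem_S (hu k)
  have hunn : ∀ k j, 0 ≤ u k j := fun k j => S_nonneg (huS k).1 j
  have hvb : ∀ j, v j = 0 ∨ v j = 1 := vertex_binary hA hv
  have hv'b : ∀ j, v' j = 0 ∨ v' j = 1 := vertex_binary hA hv'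
  have hub : ∀ k j, u k j = 0 ∨ u k j = 1 := fun k => vertex_binary hA (hu k)
  have parta : ∀ k, supp (u k) ⊆ supp v ∪ supp v' := by
    intro k j hj
    by_contra hjn
    simp only [supp, Set.mem_union, Set.mem_setOf_eq, not_or, not_not] at hjn
    have hj' : u k j ≠ 0 := hj
    have hy : ∑ k', lam k' * u k' j ≤ 0 := by
      have hh := hle j
      rw [hjn.1, hjn.2] at hh
      simpa using hh
    have hpos : 0 < ∑ k', lam k' * u k' j := by
      apply Finset.sum_pos'
      · intro i _; exact mul_nonneg (hlam i).1.le (hunn i j)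
      · exact ⟨k, Finset.mem_univ _,
          mul_pos (hlam k).1 (lt_of_le_of_ne (hunn k j) (Ne.symm hj'))⟩
    linarith
  refine ⟨parta k, ?_⟩
  intro p p' hadj
  obtain ⟨hpp', hedge⟩ := hadj
  rcases hedge with ⟨t, h1, h2⟩ | ⟨t, h1, h2⟩
  · exact key_edge hA hvb hv'b huS hub hlam hsum hle parta k hpp' h1 h2
  · rw [Set.pair_comm]
    exact key_edge hA hvb hv'b huS hub hlam hsum hle parta k hpp'.symm h1 h2
end

section
/- Let A be a binary m×n matrix and v, v' two distinct vertices of Q*(A). If the joint saturation graph G(v,v') is partite-connected (i.e., one of its two partite sets is entirely contained in a single connected component), then v and v' are adjacent in Q*(A). -/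
open Finset

section Aux
variable {m n : ℕ} {A : Matrix (Fin m) (Fin n) ℝ}

def Dset (A : Matrix (Fin m) (Fin n) ℝ) : Set (Fin n → ℝ) :=
  {x | (∀ j, ∃ k : ℕ, x j = k) ∧ ∀ i, 1 ≤ ∑ j, A i j * x j}
lemma Qstar_eq_hull (A : Matrix (Fin m) (Fin n) ℝ) : Qstar A = convexHull ℝ (Dset A) := rfl
lemma Dset_nonneg {x : Fin n → ℝ} (hx : x ∈ Dset A) (j : Fin n) : 0 ≤ x j := by
  obtain ⟨k, hk⟩ := hx.1 j; rw [hk]; positivity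
lemma Dset_one_le {x : Fin n → ℝ} (hx : x ∈ Dset A) {j : Fin n} (h : x j ≠ 0) : 1 ≤ x j := by
  obtain ⟨k, hk⟩ := hx.1 j
  rcases k with _ | k
  · norm_num at hk; exact absurd hk h
  · rw [hk]; exact_mod_cast Nat.succ_le_succ (Nat.zero_le _)
lemma bin_nonneg (hA : IsBinaryMatrix A) (t : Fin m) (j : Fin n) : 0 ≤ A t j := by
  rcases hA t j with h | h <;> rw [h] <;> norm_num
lemma bin_one (hA : IsBinaryMatrix A) {t : Fin m} {j : Fin n} (h : A t j ≠ 0) : A t j = 1 :=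
  (hA t j).resolve_left h
lemma binv_nonneg {w : Fin n → ℝ} (hw : IsBinaryVec w) (j : Fin n) : 0 ≤ w j := by
  rcases hw j with h | h <;> rw [h] <;> norm_num
lemma binv_one {w : Fin n → ℝ} (hw : IsBinaryVec w) {j : Fin n} (h : w j ≠ 0) : w j = 1 :=
  (hw j).resolve_left h
lemma vertex_mem_Dset {v : Fin n → ℝ} (hv : IsVertex (Qstar A) v) : v ∈ Dset A :=
  extremePoints_convexHull_subset hv
lemma eq_of_mid {v x y : Fin n → ℝ} (hv : IsVertex (Qstar A) v)
    (hx : x ∈ Dset A) (hy : y ∈ Dset A)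
    (hmid : v = (1/2 : ℝ) • x + (1/2 : ℝ) • y) : x = v := by
  rw [IsVertex, mem_extremePoints] at hv
  refine (hv.2 x (subset_convexHull ℝ _ hx) y (subset_convexHull ℝ _ hy) ?_).1
  exact ⟨1/2, 1/2, by norm_num, by norm_num, by norm_num, hmid.symm⟩
def upd {n : ℕ} (v : Fin n → ℝ) (j : Fin n) (c : ℝ) : Fin n → ℝ :=
  fun l => if l = j then c else v l
lemma rowsum_upd (v : Fin n → ℝ) (j : Fin n) (c : ℝ) (i : Fin m) :
    ∑ l, A i l * upd v j c l = (∑ l, A i l * v l) + A i j * (c - v j) := by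
  have h : ∀ l, A i l * upd v j c l
      = A i l * v l + (if l = j then A i j * (c - v j) else 0) := by
    intro l
    by_cases hl : l = j
    · subst hl; simp [upd]; ring
    · simp [upd, hl]
  simp_rw [h]
  rw [Finset.sum_add_distrib, Finset.sum_ite_eq' Finset.univ j]
  simp
lemma pair_le_sum {f : Fin n → ℝ} (h0 : ∀ l, 0 ≤ f l) {p q : Fin n} (hpq : p ≠ q) :
    f p + f q ≤ ∑ l, f l := by
  have h := Finset.sum_le_sum_of_subset_of_nonneg
    (Finset.subset_univ ({p, q} : Finset (Fin n))) (fun i _ _ => h0 i)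
  rwa [Finset.sum_pair hpq] at h
lemma exists_ne_of_ne_singleton {s : Set (Fin n)} {p : Fin n} (hp : p ∈ s) (hs : s ≠ {p}) :
    ∃ q ∈ s, q ≠ p := by
  by_contra h
  push_neg at h
  exact hs (Set.eq_singleton_iff_unique_mem.mpr ⟨hp, h⟩)

-- PART 2
lemma upd_int {v : Fin n → ℝ} (hv : ∀ l, ∃ k : ℕ, v l = k) (j : Fin n) (c : ℕ) :
    ∀ l, ∃ k : ℕ, upd v j (c : ℝ) l = k := by
  intro l
  by_cases hl : l = j
  · exact ⟨c, by simp [upd, hl]⟩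
  · obtain ⟨k', hk'⟩ := hv l; exact ⟨k', by simp [upd, hl, hk']⟩

lemma upd_mid {v : Fin n → ℝ} {j : Fin n} {c₁ c₂ : ℝ} (h : v j = (c₁ + c₂) / 2) :
    v = (1/2 : ℝ) • upd v j c₁ + (1/2 : ℝ) • upd v j c₂ := by
  funext l
  simp only [Pi.add_apply, Pi.smul_apply, smul_eq_mul, upd]
  by_cases hl : l = j
  · subst hl; rw [if_pos rfl, if_pos rfl, h]; ring
  · rw [if_neg hl, if_neg hl]; ring

lemma vertex_binary_s3 (hA : IsBinaryMatrix A) {v : Fin n → ℝ} (hv : IsVertex (Qstar A) v) :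
    IsBinaryVec v := by
  have hvD : v ∈ Dset A := vertex_mem_Dset hv
  intro j
  obtain ⟨k, hk⟩ := hvD.1 j
  match k, hk with
  | 0, hk => left; simpa using hk
  | 1, hk => right; simpa using hk
  | (k+2), hk =>
    exfalso
    have hterm : ∀ i l, 0 ≤ A i l * v l :=
      fun i l => mul_nonneg (bin_nonneg hA i l) (Dset_nonneg hvD l)
    have hx : upd v j ((k+1 : ℕ) : ℝ) ∈ Dset A := by
      refine ⟨upd_int hvD.1 j (k+1), ?_⟩
      intro i
      rw [rowsum_upd]
      rcases hA i j with h0 | h1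
      · rw [h0]; simpa using hvD.2 i
      · have hle : A i j * v j ≤ ∑ l, A i l * v l :=
          Finset.single_le_sum (fun l _ => hterm i l) (Finset.mem_univ j)
        rw [h1, hk] at hle ⊢
        push_cast at hle ⊢
        linarith
    have hy : upd v j ((k+3 : ℕ) : ℝ) ∈ Dset A := by
      refine ⟨upd_int hvD.1 j (k+3), ?_⟩
      intro i
      rw [rowsum_upd]
      have h1 := hvD.2 i
      have h2 := bin_nonneg hA i j
      rw [hk]
      push_cast
      nlinarith
    have hmid : v = (1/2 : ℝ) • upd v j ((k+1:ℕ):ℝ) + (1/2 : ℝ) • upd v j ((k+3:ℕ):ℝ) := by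
      apply upd_mid; rw [hk]; push_cast; ring
    have := congrFun (eq_of_mid hv hx hy hmid) j
    simp only [upd, if_pos rfl, hk] at this
    push_cast at this
    linarith

lemma private_row (hA : IsBinaryMatrix A) {v : Fin n → ℝ} (hv : IsVertex (Qstar A) v)
    {p : Fin n} (hp : v p ≠ 0) : ∃ t, rowSupp A t ∩ supp v = {p} := by
  by_contra h
  push_neg at h
  have hvD := vertex_mem_Dset hv
  have hbv := vertex_binary_s3 hA hv
  have hvp : v p = 1 := binv_one hbv hp
  have hterm : ∀ i l, 0 ≤ A i l * v l :=
    fun i l => mul_nonneg (bin_nonneg hA i l) (Dset_nonneg hvD l)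
  have hx : upd v p ((0 : ℕ) : ℝ) ∈ Dset A := by
    refine ⟨upd_int hvD.1 p 0, ?_⟩
    intro i
    rw [rowsum_upd]
    rcases hA i p with h0 | h1
    · rw [h0]; simpa using hvD.2 i
    · have hpmem : p ∈ rowSupp A i ∩ supp v := ⟨by simp only [rowSupp, Set.mem_setOf_eq, h1]; norm_num, hp⟩
      obtain ⟨q, hq, hqp⟩ := exists_ne_of_ne_singleton hpmem (h i)
      have h2 : A i p * v p + A i q * v q ≤ ∑ l, A i l * v l :=
        pair_le_sum (hterm i) (Ne.symm hqp)
      have h3 : A i q = 1 := bin_one hA hq.1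
      have h4 : v q = 1 := binv_one hbv hq.2
      rw [h1, hvp, h3, h4] at h2
      rw [h1, hvp]
      push_cast
      linarith
  have hy : upd v p ((2 : ℕ) : ℝ) ∈ Dset A := by
    refine ⟨upd_int hvD.1 p 2, ?_⟩
    intro i
    rw [rowsum_upd]
    have h1 := hvD.2 i
    have h2 := bin_nonneg hA i p
    rw [hvp]
    push_cast
    nlinarith
  have hmid : v = (1/2 : ℝ) • upd v p ((0:ℕ):ℝ) + (1/2 : ℝ) • upd v p ((2:ℕ):ℝ) := by
    apply upd_mid; rw [hvp]; push_cast; ring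
  have := congrFun (eq_of_mid hv hx hy hmid) p
  simp only [upd, if_pos rfl, hvp] at this
  norm_num at this

lemma supp_not_subset (hA : IsBinaryMatrix A) {v v' : Fin n → ℝ}
    (hv : IsVertex (Qstar A) v) (hv' : IsVertex (Qstar A) v') (hne : v ≠ v') :
    ¬ (supp v ⊆ supp v') := by
  intro hsub
  have hbv := vertex_binary_s3 hA hv
  have hbv' := vertex_binary_s3 hA hv'
  have hvD := vertex_mem_Dset hv
  have hv'D := vertex_mem_Dset hv'
  have hle : ∀ l, v l ≤ v' l := by
    intro l
    rcases hbv l with h | h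
    · rw [h]; exact binv_nonneg hbv' l
    · have : l ∈ supp v := by simp only [supp, Set.mem_setOf_eq, h]; norm_num
      have := hsub this
      rw [h, binv_one hbv' this]
  obtain ⟨j, hj⟩ : ∃ j, v j ≠ v' j := by
    by_contra h; push_neg at h; exact hne (funext h)
  have hvj : v j = 0 := by
    rcases hbv j with h | h
    · exact h
    · exfalso
      have : j ∈ supp v := by simp only [supp, Set.mem_setOf_eq, h]; norm_num
      have h2 := binv_one hbv' (hsub this)
      rw [h, h2] at hj; exact hj rfl
  have hv'j : v' j = 1 := by
    rcases hbv' j with h | h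
    · exfalso; rw [hvj, h] at hj; exact hj rfl
    · exact h
  have hterm : ∀ i l, 0 ≤ A i l * (v' l - v l) := by
    intro i l
    exact mul_nonneg (bin_nonneg hA i l) (by linarith [hle l])
  have hx : upd v' j ((0 : ℕ) : ℝ) ∈ Dset A := by
    refine ⟨upd_int hv'D.1 j 0, ?_⟩
    intro i
    rw [rowsum_upd]
    rcases hA i j with h0 | h1
    · rw [h0]; simpa using hv'D.2 i
    · have h2 : A i j * (v' j - v j) ≤ ∑ l, A i l * (v' l - v l) :=
        Finset.single_le_sum (fun l _ => hterm i l) (Finset.mem_univ j)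
      have h3 : ∑ l, A i l * (v' l - v l) = (∑ l, A i l * v' l) - ∑ l, A i l * v l := by
        rw [← Finset.sum_sub_distrib]; exact Finset.sum_congr rfl (fun l _ => by ring)
      have h4 := hvD.2 i
      rw [h1, hv'j, hvj] at h2
      rw [h1, hv'j]
      push_cast
      linarith [h3 ▸ h2]
  have hy : upd v' j ((2 : ℕ) : ℝ) ∈ Dset A := by
    refine ⟨upd_int hv'D.1 j 2, ?_⟩
    intro i
    rw [rowsum_upd]
    have h1 := hv'D.2 i
    have h2 := bin_nonneg hA i j
    rw [hv'j]
    push_cast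
    nlinarith
  have hmid : v' = (1/2 : ℝ) • upd v' j ((0:ℕ):ℝ) + (1/2 : ℝ) • upd v' j ((2:ℕ):ℝ) := by
    apply upd_mid; rw [hv'j]; push_cast; ring
  have := congrFun (eq_of_mid hv' hx hy hmid) j
  simp only [upd, if_pos rfl, hv'j] at this
  norm_num at this

lemma rowsum_singleton (hA : IsBinaryMatrix A) {w : Fin n → ℝ} (hw : IsBinaryVec w)
    {t : Fin m} {a : Fin n} (h : rowSupp A t ∩ supp w = {a}) :
    ∑ j, A t j * w j = 1 := by
  have ha : a ∈ rowSupp A t ∩ supp w := h.symm.subset rfl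
  rw [Finset.sum_eq_single a]
  · rw [bin_one hA ha.1, binv_one hw ha.2]; norm_num
  · intro b _ hba
    by_cases h1 : A t b = 0
    · rw [h1]; ring
    · by_cases h2 : w b = 0
      · rw [h2]; ring
      · exfalso
        have : b ∈ rowSupp A t ∩ supp w := ⟨h1, h2⟩
        rw [h] at this
        exact hba this
  · intro h'; exact absurd (Finset.mem_univ a) h'
end Aux

section Aux2
variable {m n : ℕ} {A : Matrix (Fin m) (Fin n) ℝ}

lemma edge_info (hA : IsBinaryMatrix A) {v v' u : Fin n → ℝ}
    (hsupp : ∀ j, u j ≠ 0 → v j ≠ 0 ∨ v' j ≠ 0)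
    (hTeq : ∀ t a b, rowSupp A t ∩ supp v = {a} → rowSupp A t ∩ supp v' = {b} →
      ∑ j, A t j * u j = 1)
    {x y : Fin n} (hxy : x ≠ y) (h : jsgEdge A v v' x y) :
    u x + u y = 1 ∧ v x ≠ 0 ∧ v' x = 0 ∧ v y = 0 ∧ v' y ≠ 0 := by
  obtain ⟨t, h1, h2⟩ := h
  have hx : x ∈ rowSupp A t ∩ supp v := h1.symm.subset rfl
  have hy : y ∈ rowSupp A t ∩ supp v' := h2.symm.subset rfl
  have hv'x : v' x = 0 := by
    by_contra hc
    have hmem : x ∈ rowSupp A t ∩ supp v' := ⟨hx.1, hc⟩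
    rw [h2] at hmem
    exact hxy (Set.mem_singleton_iff.mp hmem)
  have hvy : v y = 0 := by
    by_contra hc
    have hmem : y ∈ rowSupp A t ∩ supp v := ⟨hy.1, hc⟩
    rw [h1] at hmem
    exact hxy (Set.mem_singleton_iff.mp hmem).symm
  refine ⟨?_, hx.2, hv'x, hvy, hy.2⟩
  have hsum := hTeq t x y h1 h2
  have heq : ∑ j, A t j * u j = A t x * u x + A t y * u y := by
    rw [← Finset.sum_pair (f := fun j => A t j * u j) hxy]
    apply (Finset.sum_subset (Finset.subset_univ _) ?_).symm
    intro j _ hj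
    have hjx : j ≠ x := by intro hh; subst hh; exact hj (by simp)
    have hjy : j ≠ y := by intro hh; subst hh; exact hj (by simp)
    by_cases hA0 : A t j = 0
    · rw [hA0]; ring
    · have hu0 : u j = 0 := by
        by_contra hu
        rcases hsupp j hu with hvj | hv'j
        · have hmem : j ∈ rowSupp A t ∩ supp v := ⟨hA0, hvj⟩
          rw [h1] at hmem
          exact hjx (Set.mem_singleton_iff.mp hmem)
        · have hmem : j ∈ rowSupp A t ∩ supp v' := ⟨hA0, hv'j⟩
          rw [h2] at hmem
          exact hjy (Set.mem_singleton_iff.mp hmem)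
      rw [hu0]; ring
  rw [heq, bin_one hA hx.1, bin_one hA hy.1] at hsum
  linarith

lemma adj_struct (hA : IsBinaryMatrix A) {v v' u : Fin n → ℝ}
    (hsupp : ∀ j, u j ≠ 0 → v j ≠ 0 ∨ v' j ≠ 0)
    (hTeq : ∀ t a b, rowSupp A t ∩ supp v = {a} → rowSupp A t ∩ supp v' = {b} →
      ∑ j, A t j * u j = 1)
    {x y : Fin n} (hadj : (JSG A v v').Adj x y) :
    u x + u y = 1 ∧ ((v x ≠ 0 ∧ v' x = 0 ∧ v y = 0 ∧ v' y ≠ 0) ∨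
      (v y ≠ 0 ∧ v' y = 0 ∧ v x = 0 ∧ v' x ≠ 0)) := by
  obtain ⟨hxy, hedge | hedge⟩ := hadj
  · obtain ⟨h0, h1, h2, h3, h4⟩ := edge_info hA hsupp hTeq hxy hedge
    exact ⟨h0, Or.inl ⟨h1, h2, h3, h4⟩⟩
  · obtain ⟨h0, h1, h2, h3, h4⟩ := edge_info hA hsupp hTeq (Ne.symm hxy) hedge
    exact ⟨by linarith, Or.inr ⟨h1, h2, h3, h4⟩⟩

lemma typing (hA : IsBinaryMatrix A) {v v' u : Fin n → ℝ}
    (hpc : ∀ p ∈ supp v \ supp v', ∀ q ∈ supp v \ supp v', (JSG A v v').Reachable p q)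
    (hnn : ∀ j, 0 ≤ u j)
    (hsupp : ∀ j, u j ≠ 0 → v j ≠ 0 ∨ v' j ≠ 0)
    (hTeq : ∀ t a b, rowSupp A t ∩ supp v = {a} → rowSupp A t ∩ supp v' = {b} →
      ∑ j, A t j * u j = 1)
    {q : Fin n} (hq1 : v q ≠ 0) (hq2 : v' q = 0) (hq4 : 1 ≤ u q)
    {p : Fin n} (hp1 : v p ≠ 0) (hp2 : v' p = 0) : 1 ≤ u p := by
  have hqmem : q ∈ supp v \ supp v' := ⟨hq1, fun h => h hq2⟩
  have hpmem : p ∈ supp v \ supp v' := ⟨hp1, fun h => h hp2⟩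
  obtain ⟨w⟩ := hpc q hqmem p hpmem
  have hstep : ∀ {x y : Fin n}, (JSG A v v').Adj x y →
      ((v x ≠ 0 ∧ v' x = 0 ∧ u x = 1) ∨ (v' x ≠ 0 ∧ v x = 0 ∧ u x = 0)) →
      ((v y ≠ 0 ∧ v' y = 0 ∧ u y = 1) ∨ (v' y ≠ 0 ∧ v y = 0 ∧ u y = 0)) := by
    intro x y hadj hPx
    obtain ⟨hrel, hside⟩ := adj_struct hA hsupp hTeq hadj
    rcases hPx with ⟨ha1, ha2, ha3⟩ | ⟨ha1, ha2, ha3⟩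
    · rcases hside with ⟨_, _, hb3, hb4⟩ | ⟨_, _, _, hb4⟩
      · exact Or.inr ⟨hb4, hb3, by linarith⟩
      · exact absurd ha2 hb4
    · rcases hside with ⟨hb1, _, _, _⟩ | ⟨hb1, hb2, _, _⟩
      · exact absurd ha2 hb1
      · exact Or.inl ⟨hb1, hb2, by linarith⟩
  have hwalk : ∀ {x y : Fin n}, (JSG A v v').Walk x y →
      ((v x ≠ 0 ∧ v' x = 0 ∧ u x = 1) ∨ (v' x ≠ 0 ∧ v x = 0 ∧ u x = 0)) →
      ((v y ≠ 0 ∧ v' y = 0 ∧ u y = 1) ∨ (v' y ≠ 0 ∧ v y = 0 ∧ u y = 0)) := by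
    intro x y w
    induction w with
    | nil => exact id
    | cons h w ih => exact fun hx => ih (hstep h hx)
  cases w with
  | nil => exact hq4
  | cons hadj w' =>
    rename_i y
    obtain ⟨hrel, hside⟩ := adj_struct hA hsupp hTeq hadj
    have hPy : (v y ≠ 0 ∧ v' y = 0 ∧ u y = 1) ∨ (v' y ≠ 0 ∧ v y = 0 ∧ u y = 0) := by
      rcases hside with ⟨_, _, hb3, hb4⟩ | ⟨_, _, _, hb4⟩
      · exact Or.inr ⟨hb4, hb3, by linarith [hnn y]⟩
      · exact absurd hq2 hb4
    rcases hwalk w' hPy with ⟨_, _, h3⟩ | ⟨_, h2, _⟩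
    · linarith
    · exact absurd h2 hp1

end Aux2


section Aux3
variable {m n : ℕ} {A : Matrix (Fin m) (Fin n) ℝ}

lemma key (hA : IsBinaryMatrix A) {v v' : Fin n → ℝ} (hne : v ≠ v')
    (hv : IsVertex (Qstar A) v) (hv' : IsVertex (Qstar A) v')
    (hpc : ∀ p ∈ supp v \ supp v', ∀ q ∈ supp v \ supp v', (JSG A v v').Reachable p q)
    {c₁ c₂ : ℝ} (hc₁ : 0 ≤ c₁) (hc₂ : 0 ≤ c₂) (hc : c₁ + c₂ = 1)
    {ι : Type*} (s : Finset ι) (μ : ι → ℝ) (u : ι → Fin n → ℝ)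
    (hμ0 : ∀ i ∈ s, 0 ≤ μ i) (hμ1 : ∑ i ∈ s, μ i = 1)
    (hu : ∀ i ∈ s, u i ∈ Dset A)
    (hz : ∀ j, ∑ i ∈ s, μ i * u i j = c₁ * v j + c₂ * v' j) :
    ∀ i ∈ s, 0 < μ i → u i = v ∨ u i = v' := by
  classical
  have hbv := vertex_binary_s3 hA hv
  have hbv' := vertex_binary_s3 hA hv'
  obtain ⟨p₀, hp₀v, hp₀v'⟩ := Set.not_subset.mp (supp_not_subset hA hv hv' hne)
  obtain ⟨q₀, hq₀v', hq₀v⟩ := Set.not_subset.mp (supp_not_subset hA hv' hv hne.symm)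
  have hp₀v'0 : v' p₀ = 0 := not_ne_iff.mp hp₀v'
  have hq₀v0 : v q₀ = 0 := not_ne_iff.mp hq₀v
  set sp := s.filter (fun i => 0 < μ i) with hspdef
  have hmem : ∀ i ∈ sp, i ∈ s := fun i hi => (Finset.mem_filter.mp hi).1
  have hpos : ∀ i ∈ sp, 0 < μ i := fun i hi => (Finset.mem_filter.mp hi).2
  have hsum_sp : ∑ i ∈ sp, μ i = 1 := by
    rw [hspdef, Finset.sum_filter_of_ne, hμ1]
    intro i hi hne0
    exact lt_of_le_of_ne (hμ0 i hi) (Ne.symm hne0)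
  have hzsum : ∀ j, ∑ i ∈ sp, μ i * u i j = c₁ * v j + c₂ * v' j := by
    intro j
    rw [hspdef, Finset.sum_filter_of_ne, hz j]
    intro i hi hne0
    exact lt_of_le_of_ne (hμ0 i hi) (Ne.symm (left_ne_zero_of_mul hne0))
  have hunn : ∀ i ∈ sp, ∀ j, 0 ≤ u i j := fun i hi j => Dset_nonneg (hu i (hmem i hi)) j
  have hsupp : ∀ i ∈ sp, ∀ j, u i j ≠ 0 → v j ≠ 0 ∨ v' j ≠ 0 := by
    intro i hi j hj
    by_contra hcon
    push_neg at hcon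
    have h1 : v j = 0 := hcon.1
    have h2 : v' j = 0 := hcon.2
    have hzero : ∑ i' ∈ sp, μ i' * u i' j = 0 := by rw [hzsum j, h1, h2]; ring
    have hnn : ∀ i' ∈ sp, 0 ≤ μ i' * u i' j :=
      fun i' hi' => mul_nonneg (hpos i' hi').le (hunn i' hi' j)
    have h0 := (Finset.sum_eq_zero_iff_of_nonneg hnn).mp hzero i hi
    exact hj ((mul_eq_zero.mp h0).resolve_left (ne_of_gt (hpos i hi)))
  have hTeq : ∀ i ∈ sp, ∀ t a b, rowSupp A t ∩ supp v = {a} → rowSupp A t ∩ supp v' = {b} →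
      ∑ j, A t j * u i j = 1 := by
    intro i hi t a b ha hb
    have hswap : ∑ i' ∈ sp, μ i' * ∑ j, A t j * u i' j
        = ∑ j, A t j * ∑ i' ∈ sp, μ i' * u i' j := by
      simp_rw [Finset.mul_sum]
      rw [Finset.sum_comm]
      exact Finset.sum_congr rfl (fun j _ => Finset.sum_congr rfl (fun i' _ => by ring))
    have h1 : ∑ j, A t j * (c₁ * v j + c₂ * v' j) = 1 := by
      have hv1 : ∑ j, A t j * v j = 1 := rowsum_singleton hA hbv ha
      have hv2 : ∑ j, A t j * v' j = 1 := rowsum_singleton hA hbv' hb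
      have hsplit2 : ∑ j, A t j * (c₁ * v j + c₂ * v' j)
          = c₁ * (∑ j, A t j * v j) + c₂ * (∑ j, A t j * v' j) := by
        rw [Finset.mul_sum, Finset.mul_sum, ← Finset.sum_add_distrib]
        exact Finset.sum_congr rfl (fun j _ => by ring)
      rw [hsplit2, hv1, hv2]; linarith
    have hrowz : ∑ i' ∈ sp, μ i' * ∑ j, A t j * u i' j = 1 := by
      rw [hswap]
      simp_rw [hzsum]
      exact h1
    have hzero : ∑ i' ∈ sp, μ i' * ((∑ j, A t j * u i' j) - 1) = 0 := by
      simp_rw [mul_sub, mul_one]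
      rw [Finset.sum_sub_distrib, hrowz, hsum_sp]
      ring
    have hnn : ∀ i' ∈ sp, 0 ≤ μ i' * ((∑ j, A t j * u i' j) - 1) := by
      intro i' hi'
      have h2 := (hu i' (hmem i' hi')).2 t
      exact mul_nonneg (hpos i' hi').le (by linarith)
    have h0 := (Finset.sum_eq_zero_iff_of_nonneg hnn).mp hzero i hi
    rcases mul_eq_zero.mp h0 with h | h
    · exact absurd h (ne_of_gt (hpos i hi))
    · linarith
  have htypeA : ∀ i ∈ sp, ¬ (∀ p, v p ≠ 0 → v' p = 0 → u i p = 0) →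
      ∀ p, v p ≠ 0 → v' p = 0 → 1 ≤ u i p := by
    intro i hi hnB p hp1 hp2
    push_neg at hnB
    obtain ⟨q, hq1, hq2, hq3⟩ := hnB
    exact typing hA hpc (hunn i hi) (hsupp i hi) (hTeq i hi) hq1 hq2
      (Dset_one_le (hu i (hmem i hi)) hq3) hp1 hp2
  set TB : ι → Prop := fun i => ∀ p, v p ≠ 0 → v' p = 0 → u i p = 0 with hTBdef
  set SA := sp.filter (fun i => ¬ TB i) with hSAdef
  set SB := sp.filter TB with hSBdef
  have hmemA : ∀ i ∈ SA, i ∈ sp := fun i hi => (Finset.mem_filter.mp hi).1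
  have hmemB : ∀ i ∈ SB, i ∈ sp := fun i hi => (Finset.mem_filter.mp hi).1
  have hαβ : (∑ i ∈ SB, μ i) + (∑ i ∈ SA, μ i) = 1 := by
    rw [hSBdef, hSAdef, Finset.sum_filter_add_sum_filter_not sp TB μ, hsum_sp]
  have hsplit : ∀ j, (∑ i ∈ SB, μ i * u i j) + (∑ i ∈ SA, μ i * u i j)
      = c₁ * v j + c₂ * v' j := by
    intro j
    rw [hSBdef, hSAdef,
      Finset.sum_filter_add_sum_filter_not sp TB (fun i => μ i * u i j), hzsum j]
  have hC2 : ∀ i ∈ SB, ∀ q, v' q ≠ 0 → v q = 0 → 1 ≤ u i q := by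
    intro i hi q hq1 hq2
    obtain ⟨t, ht⟩ := private_row hA hv' hq1
    have hqrow : q ∈ rowSupp A t ∩ supp v' := ht.symm.subset rfl
    have hsum : ∑ j, A t j * u i j = A t q * u i q := by
      apply Finset.sum_eq_single
      · intro j _ hjq
        by_cases hA0 : A t j = 0
        · rw [hA0]; ring
        · have hu0 : u i j = 0 := by
            by_contra hc
            by_cases hv'j : v' j = 0
            · rcases hsupp i (hmemB i hi) j hc with h | h
              · exact hc ((Finset.mem_filter.mp hi).2 j h hv'j)
              · exact h hv'j
            · have hmem2 : j ∈ rowSupp A t ∩ supp v' := ⟨hA0, hv'j⟩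
              rw [ht] at hmem2
              exact hjq (Set.mem_singleton_iff.mp hmem2)
          rw [hu0]; ring
      · intro hcon; exact absurd (Finset.mem_univ q) hcon
    have h1 := (hu i (hmem i (hmemB i hi))).2 t
    rw [hsum, bin_one hA hqrow.1] at h1
    linarith
  have hSB0 : ∀ p, v p ≠ 0 → v' p = 0 → ∑ i ∈ SB, μ i * u i p = 0 := by
    intro p hp1 hp2
    apply Finset.sum_eq_zero
    intro i hi
    rw [(Finset.mem_filter.mp hi).2 p hp1 hp2, mul_zero]
  have hSAsum : ∀ p, v p ≠ 0 → v' p = 0 → ∑ i ∈ SA, μ i * u i p = c₁ := by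
    intro p hp1 hp2
    have h := hsplit p
    rw [hSB0 p hp1 hp2, binv_one hbv hp1, hp2] at h
    linarith
  have hαle : (∑ i ∈ SA, μ i) ≤ c₁ := by
    rw [← hSAsum p₀ hp₀v hp₀v'0]
    apply Finset.sum_le_sum
    intro i hi
    have h2 := htypeA i (hmemA i hi) (Finset.mem_filter.mp hi).2 p₀ hp₀v hp₀v'0
    nlinarith [(hpos i (hmemA i hi)).le]
  have hSBsum_ge : ∀ q, v' q ≠ 0 → v q = 0 → (∑ i ∈ SB, μ i) ≤ ∑ i ∈ SB, μ i * u i q := by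
    intro q hq1 hq2
    apply Finset.sum_le_sum
    intro i hi
    have h2 := hC2 i hi q hq1 hq2
    nlinarith [(hpos i (hmemB i hi)).le]
  have hβle : (∑ i ∈ SB, μ i) ≤ c₂ := by
    have h := hsplit q₀
    rw [binv_one hbv' hq₀v', hq₀v0] at h
    have h2 := hSBsum_ge q₀ hq₀v' hq₀v0
    have h3 : 0 ≤ ∑ i ∈ SA, μ i * u i q₀ :=
      Finset.sum_nonneg (fun i hi => mul_nonneg (hpos i (hmemA i hi)).le (hunn i (hmemA i hi) q₀))
    linarith
  have hαeq : (∑ i ∈ SA, μ i) = c₁ := by linarith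
  have hβeq : (∑ i ∈ SB, μ i) = c₂ := by linarith
  have hSA1 : ∀ i ∈ SA, ∀ p, v p ≠ 0 → v' p = 0 → u i p = 1 := by
    intro i hi p hp1 hp2
    have hzero : ∑ i' ∈ SA, μ i' * (u i' p - 1) = 0 := by
      simp_rw [mul_sub, mul_one]
      rw [Finset.sum_sub_distrib, hSAsum p hp1 hp2, hαeq]
      ring
    have hnn : ∀ i' ∈ SA, 0 ≤ μ i' * (u i' p - 1) := by
      intro i' hi'
      have h2 := htypeA i' (hmemA i' hi') (Finset.mem_filter.mp hi').2 p hp1 hp2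
      exact mul_nonneg (hpos i' (hmemA i' hi')).le (by linarith)
    have h0 := (Finset.sum_eq_zero_iff_of_nonneg hnn).mp hzero i hi
    rcases mul_eq_zero.mp h0 with h | h
    · exact absurd h (ne_of_gt (hpos i (hmemA i hi)))
    · linarith
  have hVq : ∀ q, v' q ≠ 0 → v q = 0 → (∀ i ∈ SA, u i q = 0) ∧ (∀ i ∈ SB, u i q = 1) := by
    intro q hq1 hq2
    have h := hsplit q
    rw [binv_one hbv' hq1, hq2] at h
    have h2 := hSBsum_ge q hq1 hq2
    have h3 : 0 ≤ ∑ i ∈ SA, μ i * u i q :=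
      Finset.sum_nonneg (fun i hi => mul_nonneg (hpos i (hmemA i hi)).le (hunn i (hmemA i hi) q))
    have hA0 : ∑ i ∈ SA, μ i * u i q = 0 := by linarith [hβeq]
    have hB1 : ∑ i ∈ SB, μ i * u i q = c₂ := by linarith
    constructor
    · intro i hi
      have hnn : ∀ i' ∈ SA, 0 ≤ μ i' * u i' q :=
        fun i' hi' => mul_nonneg (hpos i' (hmemA i' hi')).le (hunn i' (hmemA i' hi') q)
      have h0 := (Finset.sum_eq_zero_iff_of_nonneg hnn).mp hA0 i hi
      exact (mul_eq_zero.mp h0).resolve_left (ne_of_gt (hpos i (hmemA i hi)))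
    · intro i hi
      have hzero : ∑ i' ∈ SB, μ i' * (u i' q - 1) = 0 := by
        simp_rw [mul_sub, mul_one]
        rw [Finset.sum_sub_distrib, hB1, hβeq]
        ring
      have hnn : ∀ i' ∈ SB, 0 ≤ μ i' * (u i' q - 1) := by
        intro i' hi'
        have h4 := hC2 i' hi' q hq1 hq2
        exact mul_nonneg (hpos i' (hmemB i' hi')).le (by linarith)
      have h0 := (Finset.sum_eq_zero_iff_of_nonneg hnn).mp hzero i hi
      rcases mul_eq_zero.mp h0 with hh | hh
      · exact absurd hh (ne_of_gt (hpos i (hmemB i hi)))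
      · linarith
  have hI1 : ∀ i ∈ sp, ∀ j, v j ≠ 0 → v' j ≠ 0 → u i j = 1 := by
    intro i hi j hj1 hj2
    have hlow : ∀ i' ∈ sp, 1 ≤ u i' j := by
      intro i' hi'
      by_cases hB : TB i'
      · obtain ⟨t, ht⟩ := private_row hA hv' hj2
        have hjrow : j ∈ rowSupp A t ∩ supp v' := ht.symm.subset rfl
        have hsum : ∑ l, A t l * u i' l = A t j * u i' j := by
          apply Finset.sum_eq_single
          · intro l _ hlj
            by_cases hA0 : A t l = 0
            · rw [hA0]; ring
            · have hu0 : u i' l = 0 := by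
                by_contra hc
                by_cases hv'l : v' l = 0
                · rcases hsupp i' hi' l hc with h | h
                  · exact hc (hB l h hv'l)
                  · exact h hv'l
                · have hmem2 : l ∈ rowSupp A t ∩ supp v' := ⟨hA0, hv'l⟩
                  rw [ht] at hmem2
                  exact hlj (Set.mem_singleton_iff.mp hmem2)
              rw [hu0]; ring
          · intro hcon; exact absurd (Finset.mem_univ j) hcon
        have h1 := (hu i' (hmem i' hi')).2 t
        rw [hsum, bin_one hA hjrow.1] at h1
        linarith
      · have hi'A : i' ∈ SA := Finset.mem_filter.mpr ⟨hi', hB⟩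
        obtain ⟨t, ht⟩ := private_row hA hv hj1
        have hjrow : j ∈ rowSupp A t ∩ supp v := ht.symm.subset rfl
        have hsum : ∑ l, A t l * u i' l = A t j * u i' j := by
          apply Finset.sum_eq_single
          · intro l _ hlj
            by_cases hA0 : A t l = 0
            · rw [hA0]; ring
            · have hu0 : u i' l = 0 := by
                by_contra hc
                by_cases hvl : v l = 0
                · rcases hsupp i' hi' l hc with h | h
                  · exact h hvl
                  · exact hc ((hVq l h hvl).1 i' hi'A)
                · have hmem2 : l ∈ rowSupp A t ∩ supp v := ⟨hA0, hvl⟩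
                  rw [ht] at hmem2
                  exact hlj (Set.mem_singleton_iff.mp hmem2)
              rw [hu0]; ring
          · intro hcon; exact absurd (Finset.mem_univ j) hcon
        have h1 := (hu i' (hmem i' hi')).2 t
        rw [hsum, bin_one hA hjrow.1] at h1
        linarith
    have hs1 : ∑ i' ∈ sp, μ i' * u i' j = 1 := by
      rw [hzsum j, binv_one hbv hj1, binv_one hbv' hj2]; linarith
    have hzero : ∑ i' ∈ sp, μ i' * (u i' j - 1) = 0 := by
      simp_rw [mul_sub, mul_one]
      rw [Finset.sum_sub_distrib, hs1, hsum_sp]; ring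
    have hnn : ∀ i' ∈ sp, 0 ≤ μ i' * (u i' j - 1) :=
      fun i' hi' => mul_nonneg (hpos i' hi').le (by linarith [hlow i' hi'])
    have h0 := (Finset.sum_eq_zero_iff_of_nonneg hnn).mp hzero i hi
    rcases mul_eq_zero.mp h0 with hh | hh
    · exact absurd hh (ne_of_gt (hpos i hi))
    · linarith
  intro i his hpi
  have hi : i ∈ sp := Finset.mem_filter.mpr ⟨his, hpi⟩
  by_cases hB : TB i
  · right
    funext j
    by_cases h2 : v' j = 0
    · rw [h2]
      by_cases h1 : v j = 0
      · by_contra hc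
        rcases hsupp i hi j hc with h | h
        · exact h h1
        · exact h h2
      · exact hB j h1 h2
    · rw [binv_one hbv' h2]
      by_cases h1 : v j = 0
      · exact (hVq j h2 h1).2 i (Finset.mem_filter.mpr ⟨hi, hB⟩)
      · exact hI1 i hi j h1 h2
  · left
    funext j
    by_cases h1 : v j = 0
    · rw [h1]
      by_cases h2 : v' j = 0
      · by_contra hc
        rcases hsupp i hi j hc with h | h
        · exact h h1
        · exact h h2
      · exact (hVq j h2 h1).1 i (Finset.mem_filter.mpr ⟨hi, hB⟩)
    · rw [binv_one hbv h1]
      by_cases h2 : v' j = 0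
      · exact hSA1 i (Finset.mem_filter.mpr ⟨hi, hB⟩) j h1 h2
      · exact hI1 i hi j h1 h2

lemma jsgEdge_swap {v v' : Fin n → ℝ} {x y : Fin n} :
    jsgEdge A v' v x y ↔ jsgEdge A v v' y x :=
  exists_congr (fun _ => and_comm)

lemma JSG_comm (A : Matrix (Fin m) (Fin n) ℝ) (v v' : Fin n → ℝ) :
    JSG A v' v = JSG A v v' := by
  ext x y
  show (x ≠ y ∧ (jsgEdge A v' v x y ∨ jsgEdge A v' v y x)) ↔
       (x ≠ y ∧ (jsgEdge A v v' x y ∨ jsgEdge A v v' y x))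
  constructor
  · rintro ⟨h1, h2 | h2⟩
    · exact ⟨h1, Or.inr (jsgEdge_swap.mp h2)⟩
    · exact ⟨h1, Or.inl (jsgEdge_swap.mp h2)⟩
  · rintro ⟨h1, h2 | h2⟩
    · exact ⟨h1, Or.inr (jsgEdge_swap.mpr h2)⟩
    · exact ⟨h1, Or.inl (jsgEdge_swap.mpr h2)⟩

lemma half (hA : IsBinaryMatrix A) {v v' : Fin n → ℝ} (hne : v ≠ v')
    (hv : IsVertex (Qstar A) v) (hv' : IsVertex (Qstar A) v')
    (hpc : ∀ p ∈ supp v \ supp v', ∀ q ∈ supp v \ supp v', (JSG A v v').Reachable p q) :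
    IsExtreme ℝ (Qstar A) (segment ℝ v v') := by
  constructor
  · exact (convex_convexHull ℝ (Dset A)).segment_subset hv.1 hv'.1
  · intro x₁ hx₁ x₂ hx₂ z hzseg hzopen
    obtain ⟨c₁, c₂, hc₁, hc₂, hc, hzc⟩ := hzseg
    obtain ⟨a, b, ha, hb, hab, habz⟩ := hzopen
    rw [Qstar_eq_hull, _root_.convexHull_eq, Set.mem_setOf_eq] at hx₁ hx₂
    obtain ⟨ι₁, t₁, w₁, f₁, hw₁0, hw₁1, hf₁, hx₁c⟩ := hx₁
    obtain ⟨ι₂, t₂, w₂, f₂, hw₂0, hw₂1, hf₂, hx₂c⟩ := hx₂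
    have hx₁s : x₁ = ∑ i ∈ t₁, w₁ i • f₁ i := by
      rw [← hx₁c, Finset.centerMass_eq_of_sum_1 _ _ hw₁1]
    have hx₂s : x₂ = ∑ i ∈ t₂, w₂ i • f₂ i := by
      rw [← hx₂c, Finset.centerMass_eq_of_sum_1 _ _ hw₂1]
    set W : ι₁ ⊕ ι₂ → ℝ := Sum.elim (fun i => a * w₁ i) (fun i => b * w₂ i) with hWdef
    set U : ι₁ ⊕ ι₂ → (Fin n → ℝ) := Sum.elim f₁ f₂ with hUdef
    have hW0 : ∀ i ∈ t₁.disjSum t₂, 0 ≤ W i := by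
      intro i hi
      rcases i with i | i
      · exact mul_nonneg ha.le (hw₁0 i (Finset.inl_mem_disjSum.mp hi))
      · exact mul_nonneg hb.le (hw₂0 i (Finset.inr_mem_disjSum.mp hi))
    have hW1 : ∑ i ∈ t₁.disjSum t₂, W i = 1 := by
      rw [Finset.sum_disjSum]
      simp only [hWdef, Sum.elim_inl, Sum.elim_inr]
      rw [← Finset.mul_sum, ← Finset.mul_sum, hw₁1, hw₂1]
      linarith
    have hU : ∀ i ∈ t₁.disjSum t₂, U i ∈ Dset A := by
      intro i hi
      rcases i with i | i
      · exact hf₁ i (Finset.inl_mem_disjSum.mp hi)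
      · exact hf₂ i (Finset.inr_mem_disjSum.mp hi)
    have hzco : ∀ j, ∑ i ∈ t₁.disjSum t₂, W i * U i j = c₁ * v j + c₂ * v' j := by
      intro j
      rw [Finset.sum_disjSum]
      simp only [hWdef, hUdef, Sum.elim_inl, Sum.elim_inr]
      have h1 : ∑ i ∈ t₁, a * w₁ i * f₁ i j = a * x₁ j := by
        rw [hx₁s, Finset.sum_apply, Finset.mul_sum]
        exact Finset.sum_congr rfl (fun i _ => by
          simp only [Pi.smul_apply, smul_eq_mul]; ring)
      have h2 : ∑ i ∈ t₂, b * w₂ i * f₂ i j = b * x₂ j := by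
        rw [hx₂s, Finset.sum_apply, Finset.mul_sum]
        exact Finset.sum_congr rfl (fun i _ => by
          simp only [Pi.smul_apply, smul_eq_mul]; ring)
      have h3 : a * x₁ j + b * x₂ j = c₁ * v j + c₂ * v' j := by
        have e1 := congrFun habz j
        have e2 := congrFun hzc j
        simp only [Pi.add_apply, Pi.smul_apply, smul_eq_mul] at e1 e2
        rw [e1, ← e2]
      rw [h1, h2, h3]
    have hkey := key hA hne hv hv' hpc hc₁ hc₂ hc (t₁.disjSum t₂) W U hW0 hW1 hU hzco
    classical
    suffices hboth : x₁ ∈ segment ℝ v v' ∧ x₂ ∈ segment ℝ v v' from hboth.1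
    constructor
    · rw [← convexHull_pair]
      have hterm : ∀ i ∈ t₁, w₁ i • f₁ i ≠ 0 → 0 < w₁ i := by
        intro i hi hne0
        rcases lt_or_eq_of_le (hw₁0 i hi) with h | h
        · exact h
        · exact absurd (by rw [← h, zero_smul]) hne0
      have hx₁f : x₁ = ∑ i ∈ t₁.filter (fun i => 0 < w₁ i), w₁ i • f₁ i := by
        rw [hx₁s, Finset.sum_filter_of_ne hterm]
      have hsum1 : ∑ i ∈ t₁.filter (fun i => 0 < w₁ i), w₁ i = 1 := by
        rw [Finset.sum_filter_of_ne ?_, hw₁1]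
        intro i hi hne0
        exact lt_of_le_of_ne (hw₁0 i hi) (Ne.symm hne0)
      have hcm : x₁ = (t₁.filter (fun i => 0 < w₁ i)).centerMass w₁ f₁ := by
        rw [Finset.centerMass_eq_of_sum_1 _ _ hsum1, hx₁f]
      rw [hcm]
      apply Finset.centerMass_mem_convexHull
      · intro i hi; exact (Finset.mem_filter.mp hi).2.le
      · rw [hsum1]; norm_num
      · intro i hi
        obtain ⟨hit, hipos⟩ := Finset.mem_filter.mp hi
        have hk := hkey (Sum.inl i) (Finset.inl_mem_disjSum.mpr hit) (by
          simp only [hWdef, Sum.elim_inl]; exact mul_pos ha hipos)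
        simp only [hUdef, Sum.elim_inl] at hk
        rcases hk with h | h
        · rw [h]; exact Set.mem_insert _ _
        · rw [h]; exact Set.mem_insert_of_mem _ rfl
    · rw [← convexHull_pair]
      have hterm : ∀ i ∈ t₂, w₂ i • f₂ i ≠ 0 → 0 < w₂ i := by
        intro i hi hne0
        rcases lt_or_eq_of_le (hw₂0 i hi) with h | h
        · exact h
        · exact absurd (by rw [← h, zero_smul]) hne0
      have hx₂f : x₂ = ∑ i ∈ t₂.filter (fun i => 0 < w₂ i), w₂ i • f₂ i := by
        rw [hx₂s, Finset.sum_filter_of_ne hterm]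
      have hsum2 : ∑ i ∈ t₂.filter (fun i => 0 < w₂ i), w₂ i = 1 := by
        rw [Finset.sum_filter_of_ne ?_, hw₂1]
        intro i hi hne0
        exact lt_of_le_of_ne (hw₂0 i hi) (Ne.symm hne0)
      have hcm : x₂ = (t₂.filter (fun i => 0 < w₂ i)).centerMass w₂ f₂ := by
        rw [Finset.centerMass_eq_of_sum_1 _ _ hsum2, hx₂f]
      rw [hcm]
      apply Finset.centerMass_mem_convexHull
      · intro i hi; exact (Finset.mem_filter.mp hi).2.le
      · rw [hsum2]; norm_num
      · intro i hi
        obtain ⟨hit, hipos⟩ := Finset.mem_filter.mp hi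
        have hk := hkey (Sum.inr i) (Finset.inr_mem_disjSum.mpr hit) (by
          simp only [hWdef, Sum.elim_inr]; exact mul_pos hb hipos)
        simp only [hUdef, Sum.elim_inr] at hk
        rcases hk with h | h
        · rw [h]; exact Set.mem_insert _ _
        · rw [h]; exact Set.mem_insert_of_mem _ rfl

end Aux3

/-- if the joint saturation graph is partite-connected, then the vertices
are adjacent in `Q*(A)`. -/
theorem stmt3 {m n : ℕ} (A : Matrix (Fin m) (Fin n) ℝ) (hA : IsBinaryMatrix A)
    (hnd : ∀ s t : Fin m, s ≠ t → ¬ rowSupp A s ⊆ rowSupp A t)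
    (v v' : Fin n → ℝ) (hne : v ≠ v')
    (hv : IsVertex (Qstar A) v) (hv' : IsVertex (Qstar A) v')
    (hpc : JSGPartiteConnected A v v') :
    AdjacentVerts (Qstar A) v v' := by
  refine ⟨hne, hv, hv', ?_⟩
  rcases hpc with h | h
  · exact half hA hne hv hv' h
  · have h' : ∀ p ∈ supp v' \ supp v, ∀ q ∈ supp v' \ supp v, (JSG A v' v).Reachable p q := by
      intro p hp q hq
      rw [JSG_comm]
      exact h p hp q hq
    have hres := half hA hne.symm hv' hv h'
    rwa [segment_symm] at hres
end
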